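/- arXiv:1312.2253 — 5 statements merged into one kernel-verified Lean document; each statement's English description precedes it below -/
import Mathlib

section
/- Let U and V be centered square-integrable random vectors in ℝ^d with Tr(C_{U,U}) > 0 and Tr(C_{V,V}) > 0. Then Tr(C_{U,U} C_{V,V}) − Tr(C_{U,V} C_{V,U}) ≤ min( ‖C_{U,U}‖/Tr(C_{U,U}), ‖C_{V,V}‖/Tr(C_{V,V}) ) · ( Tr(C_{U,U})·Tr(C_{V,V}) − Tr(C_{U,V})² ), where C_{V,U} = (C_{U,V})ᵀ. Moreover, equality holds if C_{U,U} and C_{U,V} are both scalar multiples of the identity matrix, and likewise if C_{V,V} and C_{U,V} are both scalar multiples of the identity matrix. -/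
open MeasureTheory

/-- The matrix `C_{X,Y} = 𝔼(X ⊗ Y)` with entries `𝔼(X_i Y_j)`. -/
noncomputable def covMatrix {Ω : Type*} [MeasurableSpace Ω] (μ : Measure Ω) {d : ℕ}
    (X Y : Ω → EuclideanSpace ℝ (Fin d)) : Matrix (Fin d) (Fin d) ℝ :=
  Matrix.of fun i j => ∫ ω, X ω i * Y ω j ∂μ

/-- Operator norm of a `d × d` real matrix, acting on Euclidean space. -/
noncomputable def matOpNorm {d : ℕ} (S : Matrix (Fin d) (Fin d) ℝ) : ℝ :=
  ‖LinearMap.toContinuousLinearMap (Matrix.toEuclideanLin S)‖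

namespace Stmt3Aux

open Matrix Finset

variable {Ω : Type*} [MeasurableSpace Ω] {μ : Measure Ω} {d : ℕ}

/-- Cauchy–Schwarz for integrals. -/
lemma integral_mul_sq_le' {f g : Ω → ℝ} (hf : Integrable (fun ω => f ω * f ω) μ)
    (hg : Integrable (fun ω => g ω * g ω) μ) (hfg : Integrable (fun ω => f ω * g ω) μ) :
    (∫ ω, f ω * g ω ∂μ) ^ 2 ≤ (∫ ω, f ω * f ω ∂μ) * ∫ ω, g ω * g ω ∂μ := by
  have key : ∀ t : ℝ, 0 ≤ (∫ ω, f ω * f ω ∂μ) * (t * t) +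
      (2 * ∫ ω, f ω * g ω ∂μ) * t + ∫ ω, g ω * g ω ∂μ := by
    intro t
    have hrw : (fun ω => (t * f ω + g ω) * (t * f ω + g ω))
        = fun ω => (t*t) * (f ω * f ω) + ((2*t) * (f ω * g ω) + g ω * g ω) := by
      funext ω; ring
    have h0 : 0 ≤ ∫ ω, (t * f ω + g ω) * (t * f ω + g ω) ∂μ :=
      integral_nonneg fun ω => mul_self_nonneg _
    have i1 : Integrable (fun ω => 2*t*(f ω*g ω) + g ω*g ω) μ := by
      exact (hfg.const_mul (2*t)).add hg
    rw [hrw, integral_add (hf.const_mul (t*t)) i1,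
      integral_add (hfg.const_mul (2*t)) hg, integral_const_mul, integral_const_mul] at h0
    nlinarith [h0]
  have hd := discrim_le_zero key
  rw [discrim] at hd
  nlinarith [hd]

lemma measurable_coord {X : Ω → EuclideanSpace ℝ (Fin d)} (hXm : Measurable X) (i : Fin d) :
    Measurable fun ω => X ω i :=
  ((EuclideanSpace.proj (𝕜 := ℝ) i).continuous.measurable).comp hXm

lemma coord_sq_le (x : EuclideanSpace ℝ (Fin d)) (i : Fin d) : x i ^ 2 ≤ ‖x‖ ^ 2 := by
  have h : ‖x‖ ^ 2 = ∑ j, x j ^ 2 := by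
    rw [EuclideanSpace.norm_eq]
    rw [Real.sq_sqrt (by positivity)]
    simp [sq_abs]
  rw [h]
  exact Finset.single_le_sum (f := fun j => x j ^ 2) (fun j _ => sq_nonneg _) (mem_univ i)

lemma integrable_coord_mul {X Y : Ω → EuclideanSpace ℝ (Fin d)}
    (hXm : Measurable X) (hYm : Measurable Y)
    (hX2 : Integrable (fun ω => ‖X ω‖ ^ 2) μ) (hY2 : Integrable (fun ω => ‖Y ω‖ ^ 2) μ)
    (i j : Fin d) : Integrable (fun ω => X ω i * Y ω j) μ := by
  have hmeas : Measurable fun ω => X ω i * Y ω j :=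
    (measurable_coord hXm i).mul (measurable_coord hYm j)
  have hbound : ∀ ω, ‖X ω i * Y ω j‖ ≤ (‖X ω‖ ^ 2 + ‖Y ω‖ ^ 2) / 2 := by
    intro ω
    have h1 := coord_sq_le (X ω) i
    have h2 := coord_sq_le (Y ω) j
    rw [Real.norm_eq_abs, abs_mul]
    nlinarith [abs_nonneg (X ω i), abs_nonneg (Y ω j), sq_abs (X ω i), sq_abs (Y ω j),
      sq_nonneg (|X ω i| - |Y ω j|)]
  exact Integrable.mono' ((hX2.add hY2).div_const 2) hmeas.aestronglyMeasurable
    (ae_of_all _ hbound)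

lemma qf_rw {X Y : Ω → EuclideanSpace ℝ (Fin d)} (x y : Fin d → ℝ) :
    (fun ω => (∑ i, x i * X ω i) * (∑ j, y j * Y ω j))
      = fun ω => ∑ i, ∑ j, (x i * y j) * (X ω i * Y ω j) := by
  funext ω
  rw [Finset.sum_mul_sum]
  exact Finset.sum_congr rfl fun i _ => Finset.sum_congr rfl fun j _ => by ring

lemma integrable_qf {X Y : Ω → EuclideanSpace ℝ (Fin d)}
    (hint : ∀ i j : Fin d, Integrable (fun ω => X ω i * Y ω j) μ) (x y : Fin d → ℝ) :
    Integrable (fun ω => (∑ i, x i * X ω i) * (∑ j, y j * Y ω j)) μ := by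
  rw [qf_rw]
  exact integrable_finset_sum _ fun i _ => integrable_finset_sum _
    fun j _ => (hint i j).const_mul _

lemma dot_cov_mulVec {X Y : Ω → EuclideanSpace ℝ (Fin d)}
    (hint : ∀ i j : Fin d, Integrable (fun ω => X ω i * Y ω j) μ)
    (x y : Fin d → ℝ) :
    x ⬝ᵥ (covMatrix μ X Y *ᵥ y) = ∫ ω, (∑ i, x i * X ω i) * (∑ j, y j * Y ω j) ∂μ := by
  have hint2 : ∀ i j : Fin d, Integrable (fun ω => (x i * y j) * (X ω i * Y ω j)) μ :=
    fun i j => (hint i j).const_mul _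
  have step : ∀ i, ∫ ω, (∑ j, (x i * y j) * (X ω i * Y ω j)) ∂μ
      = ∑ j, (x i * y j) * ∫ ω, X ω i * Y ω j ∂μ := by
    intro i
    rw [integral_finset_sum _ (fun j _ => hint2 i j)]
    exact Finset.sum_congr rfl fun j _ => integral_const_mul _ _
  calc x ⬝ᵥ (covMatrix μ X Y *ᵥ y) = ∑ i, ∑ j, (x i * y j) * ∫ ω, X ω i * Y ω j ∂μ := by
        simp only [dotProduct, Matrix.mulVec, covMatrix, Matrix.of_apply, Finset.mul_sum]
        exact Finset.sum_congr rfl fun i _ => Finset.sum_congr rfl fun j _ => by ring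
    _ = ∫ ω, ∑ i, ∑ j, (x i * y j) * (X ω i * Y ω j) ∂μ := by
        rw [integral_finset_sum _ (fun i _ => integrable_finset_sum _ (fun j _ => hint2 i j))]
        exact (Finset.sum_congr rfl fun i _ => (step i).symm)
    _ = ∫ ω, (∑ i, x i * X ω i) * (∑ j, y j * Y ω j) ∂μ := by rw [qf_rw]

lemma matOpNorm_nonneg (S : Matrix (Fin d) (Fin d) ℝ) : 0 ≤ matOpNorm S := norm_nonneg _

lemma toCLM_apply (S : Matrix (Fin d) (Fin d) ℝ) (x : EuclideanSpace ℝ (Fin d)) (i : Fin d) :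
    (LinearMap.toContinuousLinearMap (Matrix.toEuclideanLin S) x) i = (S *ᵥ (fun j => x j)) i := by
  simp [Matrix.toEuclideanLin_apply]

lemma dot_mulVec_le_opNorm (S : Matrix (Fin d) (Fin d) ℝ) (x : Fin d → ℝ) :
    x ⬝ᵥ (S *ᵥ x) ≤ matOpNorm S * (x ⬝ᵥ x) := by
  set L := LinearMap.toContinuousLinearMap (Matrix.toEuclideanLin S) with hL
  set x' : EuclideanSpace ℝ (Fin d) := (WithLp.equiv 2 _).symm x with hx'
  have h1 : x ⬝ᵥ (S *ᵥ x) = @inner ℝ _ _ x' (L x') := by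
    rw [PiLp.inner_apply]
    simp only [RCLike.inner_apply, starRingEnd_apply, star_trivial]
    refine Finset.sum_congr rfl fun i _ => ?_
    rw [toCLM_apply]
    rw [mul_comm]; rfl
  have h2 : @inner ℝ _ _ x' (L x') ≤ ‖x'‖ * ‖L x'‖ := real_inner_le_norm _ _
  have h3 : ‖L x'‖ ≤ ‖L‖ * ‖x'‖ := L.le_opNorm x'
  have h4 : (x ⬝ᵥ x) = ‖x'‖ ^ 2 := by
    rw [← real_inner_self_eq_norm_sq, PiLp.inner_apply]
    simp only [RCLike.inner_apply, starRingEnd_apply, star_trivial]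
    rfl
  have h5 : (0:ℝ) ≤ ‖x'‖ := norm_nonneg _
  calc x ⬝ᵥ (S *ᵥ x) ≤ ‖x'‖ * ‖L x'‖ := h1 ▸ h2
    _ ≤ ‖x'‖ * (‖L‖ * ‖x'‖) := by nlinarith
    _ = matOpNorm S * (x ⬝ᵥ x) := by rw [h4, matOpNorm, ← hL]; ring

lemma diag_le_opNorm (S : Matrix (Fin d) (Fin d) ℝ) (i : Fin d) : S i i ≤ matOpNorm S := by
  have h := dot_mulVec_le_opNorm S (Pi.single i 1)
  have h1 : Pi.single i 1 ⬝ᵥ (S *ᵥ Pi.single i 1) = S i i := by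
    rw [Matrix.mulVec_single, single_dotProduct]
    simp
  have h2 : (Pi.single i (1:ℝ)) ⬝ᵥ (Pi.single i 1) = 1 := by
    rw [single_dotProduct]
    simp
  rw [h1, h2, mul_one] at h
  exact h

lemma matOpNorm_smul_one (hd : 0 < d) {α : ℝ} (hα : 0 ≤ α) :
    matOpNorm (α • (1 : Matrix (Fin d) (Fin d) ℝ)) = α := by
  set L := LinearMap.toContinuousLinearMap
    (Matrix.toEuclideanLin (α • (1 : Matrix (Fin d) (Fin d) ℝ))) with hL
  have hLx : ∀ x : EuclideanSpace ℝ (Fin d), L x = α • x := by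
    intro x
    ext i
    rw [toCLM_apply]
    simp [Matrix.smul_mulVec, Matrix.one_mulVec]
  show ‖L‖ = α
  refine le_antisymm ?_ ?_
  · refine ContinuousLinearMap.opNorm_le_bound L hα fun x => ?_
    rw [hLx, norm_smul, Real.norm_eq_abs, abs_of_nonneg hα]
  · set e : EuclideanSpace ℝ (Fin d) := EuclideanSpace.single (⟨0, hd⟩ : Fin d) (1:ℝ) with he
    have hne : ‖e‖ = 1 := by rw [he, EuclideanSpace.norm_single]; simp
    have := L.le_opNorm e
    rw [hLx, norm_smul, Real.norm_eq_abs, abs_of_nonneg hα, hne] at this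
    linarith

lemma scalar_key {n : ℕ} {a : ℝ} {lam β c : Fin n → ℝ} (ha : 0 ≤ a)
    (hlam0 : ∀ i, 0 ≤ lam i) (hlama : ∀ i, lam i ≤ a)
    (hβ0 : ∀ i, 0 ≤ β i) (hcs : ∀ i, c i ^ 2 ≤ lam i * β i) :
    (∑ i, lam i) * ((∑ i, lam i * β i) - ∑ i, c i ^ 2) ≤
      a * ((∑ i, lam i) * (∑ i, β i) - (∑ i, c i) ^ 2) := by
  set s := ∑ i, lam i with hs
  have hs0 : 0 ≤ s := Finset.sum_nonneg fun i _ => hlam0 i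
  set t : Fin n → ℝ := fun i => c i / Real.sqrt (lam i) with ht
  have hct : ∀ i, c i = Real.sqrt (lam i) * t i := by
    intro i
    rcases eq_or_lt_of_le (hlam0 i) with h|h
    · have hc0 : c i = 0 := by nlinarith [hcs i, sq_nonneg (c i), hβ0 i, sq_abs (c i)]
      simp [ht, hc0]
    · have hsq : Real.sqrt (lam i) ≠ 0 := by positivity
      simp only [ht]
      field_simp
  have hc2 : ∀ i, c i ^ 2 = lam i * t i ^ 2 := by
    intro i; rw [hct i, mul_pow, Real.sq_sqrt (hlam0 i)]
  have htβ : ∀ i, t i ^ 2 ≤ β i := by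
    intro i
    rcases eq_or_lt_of_le (hlam0 i) with h|h
    · have : t i = 0 := by simp [ht, ← h]
      rw [this]; simpa using hβ0 i
    · have h2 := hcs i; rw [hc2 i] at h2
      exact le_of_mul_le_mul_left h2 h
  have hCS : (∑ i, c i) ^ 2 ≤ s * ∑ i, t i ^ 2 := by
    calc (∑ i, c i)^2 = (∑ i, Real.sqrt (lam i) * t i)^2 := by
          rw [Finset.sum_congr rfl fun i _ => hct i]
      _ ≤ (∑ i, Real.sqrt (lam i)^2) * ∑ i, t i ^2 :=
          Finset.sum_mul_sq_le_sq_mul_sq Finset.univ _ _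
      _ = s * ∑ i, t i ^2 := by
          rw [hs]
          congr 1
          exact Finset.sum_congr rfl fun i _ => Real.sq_sqrt (hlam0 i)
  have h1 : (∑ i, lam i * β i) - ∑ i, c i ^ 2 = ∑ i, lam i * (β i - t i ^2) := by
    rw [← Finset.sum_sub_distrib]
    exact Finset.sum_congr rfl fun i _ => by rw [hc2 i]; ring
  have h2 : ∑ i, lam i * (β i - t i^2) ≤ ∑ i, a * (β i - t i^2) :=
    Finset.sum_le_sum fun i _ => mul_le_mul_of_nonneg_right (hlama i) (by linarith [htβ i])
  have h3 : ∑ i, a * (β i - t i^2) = a * ((∑ i, β i) - ∑ i, t i ^2) := by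
    rw [← Finset.mul_sum, Finset.sum_sub_distrib]
  calc s * ((∑ i, lam i * β i) - ∑ i, c i^2) = s * ∑ i, lam i * (β i - t i^2) := by rw [h1]
    _ ≤ s * (a * ((∑ i, β i) - ∑ i, t i ^2)) := by
        rw [← h3]; exact mul_le_mul_of_nonneg_left h2 hs0
    _ = a * (s * (∑ i, β i) - s * ∑ i, t i ^2) := by ring
    _ ≤ a * (s * (∑ i, β i) - (∑ i, c i)^2) := by nlinarith [hCS]

lemma trace_diagonal_mul (v : Fin d → ℝ) (M : Matrix (Fin d) (Fin d) ℝ) :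
    (Matrix.diagonal v * M).trace = ∑ i, v i * M i i := by
  simp [Matrix.trace, Matrix.diag, Matrix.mul_apply, Matrix.diagonal]

lemma trace_mul_transpose_self (M : Matrix (Fin d) (Fin d) ℝ) :
    (M * Mᵀ).trace = ∑ i, ∑ j, M i j ^ 2 := by
  simp [Matrix.trace, Matrix.diag, Matrix.mul_apply, Matrix.transpose_apply, sq]

lemma covMatrix_comm (X Y : Ω → EuclideanSpace ℝ (Fin d)) :
    covMatrix μ Y X = (covMatrix μ X Y)ᵀ := by
  ext i j
  simp only [covMatrix, Matrix.of_apply, Matrix.transpose_apply]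
  congr 1
  funext ω
  ring

end Stmt3Aux

namespace Stmt3Aux

open Matrix Finset

variable {Ω : Type*} [MeasurableSpace Ω] {μ : Measure Ω} {d : ℕ}

lemma key_ineq (μ : Measure Ω) [IsProbabilityMeasure μ]
    (U V : Ω → EuclideanSpace ℝ (Fin d)) (hUm : Measurable U) (hVm : Measurable V)
    (hU2 : Integrable (fun ω => ‖U ω‖ ^ 2) μ) (hV2 : Integrable (fun ω => ‖V ω‖ ^ 2) μ)
    (hUtr : 0 < (covMatrix μ U U).trace) :
    (covMatrix μ U U * covMatrix μ V V).trace - (covMatrix μ U V * covMatrix μ V U).trace ≤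
      (matOpNorm (covMatrix μ U U) / (covMatrix μ U U).trace) *
        ((covMatrix μ U U).trace * (covMatrix μ V V).trace - (covMatrix μ U V).trace ^ 2) := by
  have hintUU := fun i j => integrable_coord_mul hUm hUm hU2 hU2 i j (μ := μ)
  have hintVV := fun i j => integrable_coord_mul hVm hVm hV2 hV2 i j (μ := μ)
  have hintUV := fun i j => integrable_coord_mul hUm hVm hU2 hV2 i j (μ := μ)
  set A := covMatrix μ U U with hA
  set B := covMatrix μ V V with hB
  set C := covMatrix μ U V with hC
  have hVU : covMatrix μ V U = Cᵀ := covMatrix_comm U V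
  have hAH : A.IsHermitian := by
    rw [Matrix.IsHermitian, Matrix.conjTranspose_eq_transpose_of_trivial]
    rw [hA, ← covMatrix_comm U U]
  set P : Matrix (Fin d) (Fin d) ℝ := (hAH.eigenvectorUnitary : Matrix (Fin d) (Fin d) ℝ) with hP
  have hPs : star P * P = 1 :=
    (Matrix.mem_unitaryGroup_iff').mp hAH.eigenvectorUnitary.2
  have hPP : P * star P = 1 :=
    (Matrix.mem_unitaryGroup_iff).mp hAH.eigenvectorUnitary.2
  set lam : Fin d → ℝ := hAH.eigenvalues with hlam
  have hdiag : star P * A * P = Matrix.diagonal lam := by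
    have h := hAH.conjStarAlgAut_star_eigenvectorUnitary
    simpa using h
  have conj_trace : ∀ M : Matrix (Fin d) (Fin d) ℝ, (star P * M * P).trace = M.trace := by
    intro M
    rw [Matrix.trace_mul_comm, ← Matrix.mul_assoc, hPP, Matrix.one_mul]
  set v : Fin d → Fin d → ℝ := fun i k => P k i with hv
  have hstarP : star P = Pᵀ := by
    rw [Matrix.star_eq_conjTranspose, Matrix.conjTranspose_eq_transpose_of_trivial]
  have conj_entry : ∀ (M : Matrix (Fin d) (Fin d) ℝ) (i : Fin d),
      (star P * M * P) i i = v i ⬝ᵥ (M *ᵥ v i) := by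
    intro M i
    rw [hstarP]
    have hl : ((Pᵀ * M) * P) i i = ∑ l, (∑ k, P k i * M k l) * P l i := by
      simp [Matrix.mul_apply, Matrix.transpose_apply]
    rw [hl]
    simp only [dotProduct, Matrix.mulVec, hv, Finset.mul_sum]
    rw [Finset.sum_comm]
    refine Finset.sum_congr rfl fun l _ => ?_
    rw [Finset.sum_mul]
    exact Finset.sum_congr rfl fun k _ => by ring
  have hvnorm : ∀ i, v i ⬝ᵥ v i = 1 := by
    intro i
    have h : (star P * P) i i = v i ⬝ᵥ v i := by
      rw [hstarP]
      simp [Matrix.mul_apply, Matrix.transpose_apply, dotProduct, hv]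
    rw [hPs] at h
    simp at h
    exact h.symm
  -- integral representations
  set f : Fin d → Ω → ℝ := fun i ω => ∑ k, v i k * U ω k with hf
  set g : Fin d → Ω → ℝ := fun i ω => ∑ k, v i k * V ω k with hg
  set bet : Fin d → ℝ := fun i => v i ⬝ᵥ (B *ᵥ v i) with hbet
  set cc : Fin d → ℝ := fun i => v i ⬝ᵥ (C *ᵥ v i) with hcc
  have hlam_eq : ∀ i, lam i = ∫ ω, f i ω * f i ω ∂μ := by
    intro i
    have h1 : (star P * A * P) i i = lam i := by rw [hdiag]; simp
    rw [← h1, conj_entry, hA, dot_cov_mulVec hintUU]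
  have hbet_eq : ∀ i, bet i = ∫ ω, g i ω * g i ω ∂μ := by
    intro i
    show v i ⬝ᵥ (B *ᵥ v i) = _
    rw [hB, dot_cov_mulVec hintVV]
  have hcc_eq : ∀ i, cc i = ∫ ω, f i ω * g i ω ∂μ := by
    intro i
    show v i ⬝ᵥ (C *ᵥ v i) = _
    rw [hC, dot_cov_mulVec hintUV]
  have hbet_dot : ∀ i, bet i = v i ⬝ᵥ (B *ᵥ v i) := fun i => rfl
  have hcc_dot : ∀ i, cc i = v i ⬝ᵥ (C *ᵥ v i) := fun i => rfl
  have hsplit : ∀ M N : Matrix (Fin d) (Fin d) ℝ,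
      star P * (M * N) * P = (star P * M * P) * (star P * N * P) := by
    intro M N
    have h : P * (star P * (N * P)) = N * P := by
      rw [← Matrix.mul_assoc, hPP, Matrix.one_mul]
    simp only [Matrix.mul_assoc, h]
  -- pointwise facts
  have hlam0 : ∀ i, 0 ≤ lam i := by
    intro i
    rw [hlam_eq i]
    exact integral_nonneg fun ω => mul_self_nonneg _
  have hbet0 : ∀ i, 0 ≤ bet i := by
    intro i
    rw [hbet_eq i]
    exact integral_nonneg fun ω => mul_self_nonneg _
  have hcs : ∀ i, cc i ^ 2 ≤ lam i * bet i := by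
    intro i
    rw [hcc_eq i, hbet_eq i, hlam_eq i]
    exact integral_mul_sq_le' (integrable_qf hintUU _ _) (integrable_qf hintVV _ _)
      (integrable_qf hintUV _ _)
  have hlama : ∀ i, lam i ≤ matOpNorm A := by
    intro i
    have h1 : (star P * A * P) i i = lam i := by rw [hdiag]; simp
    have h2 := dot_mulVec_le_opNorm A (v i)
    rw [hvnorm i, mul_one] at h2
    rw [← h1, conj_entry]
    exact h2
  -- traces
  have htrA : A.trace = ∑ i, lam i := by
    rw [← conj_trace A, hdiag, Matrix.trace_diagonal]
  have htrB : B.trace = ∑ i, bet i := by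
    rw [← conj_trace B]
    simp only [Matrix.trace, Matrix.diag]
    exact Finset.sum_congr rfl fun i _ => (conj_entry B i).trans (hbet_dot i).symm
  have htrC : C.trace = ∑ i, cc i := by
    rw [← conj_trace C]
    simp only [Matrix.trace, Matrix.diag]
    exact Finset.sum_congr rfl fun i _ => (conj_entry C i).trans (hcc_dot i).symm
  have htrAB : (A * B).trace = ∑ i, lam i * bet i := by
    rw [← conj_trace (A * B), hsplit A B, hdiag, trace_diagonal_mul]
    refine Finset.sum_congr rfl fun i _ => ?_
    rw [conj_entry, ← hbet_dot]
  have htrCC : ∑ i, cc i ^ 2 ≤ (C * Cᵀ).trace := by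
    set C' := star P * C * P with hC'
    have hC't : C'ᵀ = star P * Cᵀ * P := by
      rw [hC', hstarP, Matrix.transpose_mul, Matrix.transpose_mul, Matrix.transpose_transpose,
        Matrix.mul_assoc]
    have hsplit2 : star P * (C * Cᵀ) * P = C' * C'ᵀ := by
      rw [hC't, hC']
      exact hsplit C Cᵀ
    rw [← conj_trace (C * Cᵀ), hsplit2, trace_mul_transpose_self]
    refine Finset.sum_le_sum fun i _ => ?_
    have : cc i ^ 2 = C' i i ^ 2 := by rw [hcc_dot, hC', conj_entry]
    rw [this]
    exact Finset.single_le_sum (f := fun j => C' i j ^ 2) (fun j _ => sq_nonneg _) (mem_univ i)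
  -- conclusion
  have hs : (0:ℝ) < ∑ i, lam i := htrA ▸ hUtr
  have main := scalar_key (matOpNorm_nonneg A) hlam0 hlama hbet0 hcs
  rw [hVU]
  rw [div_mul_eq_mul_div, le_div_iff₀ hUtr]
  rw [htrA, htrB, htrC, htrAB]
  nlinarith [main, mul_le_mul_of_nonneg_right htrCC (le_of_lt hs), hs]

end Stmt3Aux

namespace Stmt3Aux

open Matrix Finset

variable {Ω : Type*} [MeasurableSpace Ω] {μ : Measure Ω} {d : ℕ}

lemma key_ineq' (μ : Measure Ω) [IsProbabilityMeasure μ]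
    (U V : Ω → EuclideanSpace ℝ (Fin d)) (hUm : Measurable U) (hVm : Measurable V)
    (hU2 : Integrable (fun ω => ‖U ω‖ ^ 2) μ) (hV2 : Integrable (fun ω => ‖V ω‖ ^ 2) μ)
    (hVtr : 0 < (covMatrix μ V V).trace) :
    (covMatrix μ U U * covMatrix μ V V).trace - (covMatrix μ U V * covMatrix μ V U).trace ≤
      (matOpNorm (covMatrix μ V V) / (covMatrix μ V V).trace) *
        ((covMatrix μ U U).trace * (covMatrix μ V V).trace - (covMatrix μ U V).trace ^ 2) := by
  have h := key_ineq μ V U hVm hUm hV2 hU2 hVtr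
  rw [covMatrix_comm U V] at h
  rw [Matrix.trace_mul_comm ((covMatrix μ U V)ᵀ) (covMatrix μ U V),
    Matrix.trace_mul_comm (covMatrix μ V V) (covMatrix μ U U),
    Matrix.trace_transpose,
    mul_comm ((covMatrix μ V V).trace) ((covMatrix μ U U).trace)] at h
  rw [covMatrix_comm U V]
  exact h

lemma trace_le_card_opNorm (S : Matrix (Fin d) (Fin d) ℝ) :
    S.trace ≤ (d : ℝ) * matOpNorm S := by
  have h : S.trace = ∑ i, S i i := by simp [Matrix.trace, Matrix.diag]
  rw [h]
  calc ∑ i, S i i ≤ ∑ _i : Fin d, matOpNorm S :=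
        Finset.sum_le_sum fun i _ => diag_le_opNorm S i
    _ = (d : ℝ) * matOpNorm S := by
        rw [Finset.sum_const, Finset.card_univ, Fintype.card_fin, nsmul_eq_mul]

end Stmt3Aux

open Stmt3Aux in
/-- For centered square-integrable random vectors `U, V` in `ℝ^d` with
positive-trace covariances:
`Tr(C_{U,U}C_{V,V}) − Tr(C_{U,V}C_{V,U})
  ≤ min(‖C_{U,U}‖/Tr C_{U,U}, ‖C_{V,V}‖/Tr C_{V,V}) · (Tr C_{U,U} · Tr C_{V,V} − (Tr C_{U,V})²)`,
with equality when `C_{U,U}` and `C_{U,V}` (resp. `C_{V,V}` and `C_{U,V}`) are scalar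
multiples of the identity. -/
theorem stmt3 {d : ℕ} {Ω : Type*} [MeasurableSpace Ω] (μ : Measure Ω)
    [IsProbabilityMeasure μ]
    (U V : Ω → EuclideanSpace ℝ (Fin d))
    (hUm : Measurable U) (hVm : Measurable V)
    (hUcen : ∫ ω, U ω ∂μ = 0) (hVcen : ∫ ω, V ω ∂μ = 0)
    (hU2 : Integrable (fun ω => ‖U ω‖ ^ 2) μ) (hV2 : Integrable (fun ω => ‖V ω‖ ^ 2) μ)
    (hUtr : 0 < (covMatrix μ U U).trace) (hVtr : 0 < (covMatrix μ V V).trace) :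
    ((covMatrix μ U U * covMatrix μ V V).trace - (covMatrix μ U V * covMatrix μ V U).trace ≤
      min (matOpNorm (covMatrix μ U U) / (covMatrix μ U U).trace)
          (matOpNorm (covMatrix μ V V) / (covMatrix μ V V).trace) *
        ((covMatrix μ U U).trace * (covMatrix μ V V).trace - (covMatrix μ U V).trace ^ 2))
    ∧ (((∃ a : ℝ, covMatrix μ U U = a • (1 : Matrix (Fin d) (Fin d) ℝ)) ∧
        (∃ b : ℝ, covMatrix μ U V = b • (1 : Matrix (Fin d) (Fin d) ℝ))) →
      (covMatrix μ U U * covMatrix μ V V).trace - (covMatrix μ U V * covMatrix μ V U).trace =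
        min (matOpNorm (covMatrix μ U U) / (covMatrix μ U U).trace)
            (matOpNorm (covMatrix μ V V) / (covMatrix μ V V).trace) *
          ((covMatrix μ U U).trace * (covMatrix μ V V).trace - (covMatrix μ U V).trace ^ 2))
    ∧ (((∃ a : ℝ, covMatrix μ V V = a • (1 : Matrix (Fin d) (Fin d) ℝ)) ∧
        (∃ b : ℝ, covMatrix μ U V = b • (1 : Matrix (Fin d) (Fin d) ℝ))) →
      (covMatrix μ U U * covMatrix μ V V).trace - (covMatrix μ U V * covMatrix μ V U).trace =
        min (matOpNorm (covMatrix μ U U) / (covMatrix μ U U).trace)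
            (matOpNorm (covMatrix μ V V) / (covMatrix μ V V).trace) *
          ((covMatrix μ U U).trace * (covMatrix μ V V).trace - (covMatrix μ U V).trace ^ 2)) := by
  have hd0 : 0 < d := by
    rcases Nat.eq_zero_or_pos d with h|h
    · subst h
      have : (covMatrix μ U U).trace = 0 := by
        simp [Matrix.trace]
      rw [this] at hUtr
      exact absurd hUtr (lt_irrefl 0)
    · exact h
  have hdR : (0:ℝ) < d := by exact_mod_cast hd0
  refine ⟨?_, ?_, ?_⟩
  · rcases min_cases (matOpNorm (covMatrix μ U U) / (covMatrix μ U U).trace)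
        (matOpNorm (covMatrix μ V V) / (covMatrix μ V V).trace) with ⟨hm, _⟩ | ⟨hm, _⟩
    · rw [hm]
      exact key_ineq μ U V hUm hVm hU2 hV2 hUtr
    · rw [hm]
      exact key_ineq' μ U V hUm hVm hU2 hV2 hVtr
  · rintro ⟨⟨α, hAeq⟩, ⟨b, hCeq⟩⟩
    have htrA' : (covMatrix μ U U).trace = α * d := by
      rw [hAeq, Matrix.trace_smul, Matrix.trace_one]
      simp [smul_eq_mul]
    have hα : 0 < α := by
      rw [htrA'] at hUtr
      nlinarith
    have hop : matOpNorm (covMatrix μ U U) = α := by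
      rw [hAeq]; exact matOpNorm_smul_one hd0 hα.le
    have hmin : min (matOpNorm (covMatrix μ U U) / (covMatrix μ U U).trace)
        (matOpNorm (covMatrix μ V V) / (covMatrix μ V V).trace) = 1 / d := by
      have h1 : matOpNorm (covMatrix μ U U) / (covMatrix μ U U).trace = 1 / d := by
        rw [hop, htrA']
        rw [div_eq_div_iff (by positivity) hdR.ne']
        ring
      rw [h1]
      refine min_eq_left ?_
      rw [div_le_div_iff₀ hdR hVtr]
      have := trace_le_card_opNorm (covMatrix μ V V)
      linarith
    have hVUeq : covMatrix μ V U = b • 1 := by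
      rw [covMatrix_comm U V, hCeq, Matrix.transpose_smul, Matrix.transpose_one]
    have e1 : (covMatrix μ U U * covMatrix μ V V).trace = α * (covMatrix μ V V).trace := by
      rw [hAeq, Matrix.smul_mul, Matrix.one_mul, Matrix.trace_smul, smul_eq_mul]
    have e2 : (covMatrix μ U V * covMatrix μ V U).trace = b * b * d := by
      rw [hCeq, hVUeq, Matrix.smul_mul, Matrix.one_mul, smul_smul, Matrix.trace_smul,
        Matrix.trace_one, smul_eq_mul]
      simp
    have e3 : (covMatrix μ U V).trace = b * d := by
      rw [hCeq, Matrix.trace_smul, Matrix.trace_one, smul_eq_mul]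
      simp
    rw [hmin, e1, e2, e3, htrA']
    field_simp
  · rintro ⟨⟨α, hBeq⟩, ⟨b, hCeq⟩⟩
    have htrB' : (covMatrix μ V V).trace = α * d := by
      rw [hBeq, Matrix.trace_smul, Matrix.trace_one]
      simp [smul_eq_mul]
    have hα : 0 < α := by
      rw [htrB'] at hVtr
      nlinarith
    have hop : matOpNorm (covMatrix μ V V) = α := by
      rw [hBeq]; exact matOpNorm_smul_one hd0 hα.le
    have hmin : min (matOpNorm (covMatrix μ U U) / (covMatrix μ U U).trace)
        (matOpNorm (covMatrix μ V V) / (covMatrix μ V V).trace) = 1 / d := by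
      have h1 : matOpNorm (covMatrix μ V V) / (covMatrix μ V V).trace = 1 / d := by
        rw [hop, htrB']
        rw [div_eq_div_iff (by positivity) hdR.ne']
        ring
      rw [h1]
      refine min_eq_right ?_
      rw [div_le_div_iff₀ hdR hUtr]
      have := trace_le_card_opNorm (covMatrix μ U U)
      linarith
    have hVUeq : covMatrix μ V U = b • 1 := by
      rw [covMatrix_comm U V, hCeq, Matrix.transpose_smul, Matrix.transpose_one]
    have e1 : (covMatrix μ U U * covMatrix μ V V).trace = α * (covMatrix μ U U).trace := by
      rw [hBeq, Matrix.mul_smul, Matrix.mul_one, Matrix.trace_smul, smul_eq_mul]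
    have e2 : (covMatrix μ U V * covMatrix μ V U).trace = b * b * d := by
      rw [hCeq, hVUeq, Matrix.smul_mul, Matrix.one_mul, smul_smul, Matrix.trace_smul,
        Matrix.trace_one, smul_eq_mul]
      simp
    have e3 : (covMatrix μ U V).trace = b * d := by
      rw [hCeq, Matrix.trace_smul, Matrix.trace_one, smul_eq_mul]
      simp
    rw [hmin, e1, e2, e3, htrB']
    field_simp
end

section
/- Let U and V be centered random vectors in ℝ^d with 𝔼|U|⁴ < ∞ and 𝔼|V|⁴ < ∞, and let (U_*,V_*) be an independent copy of the pair (U,V). Then the average square parallelogram area admits the exact decomposition: 𝔼( |U−U_*|²|V−V_*|² − ((U−U_*)·(V−V_*))² ) = 2·𝔼( |U|²|V|² − (U·V)² ) + Tr( (C_{U,V} − C_{V,U})(C_{V,U} − C_{U,V}) ) + 2·( Tr(C_{U,U})·Tr(C_{V,V}) − Tr(C_{U,V})² − Tr(C_{U,U} C_{V,V}) + Tr(C_{U,V} C_{V,U}) ), and each of the three summands on the right-hand side is nonnegative. -/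
open MeasureTheory ProbabilityTheory
open scoped RealInnerProductSpace

private lemma aux_le_pow4 {c : ℝ} : c ≤ 1 + c^4 := by
  nlinarith [sq_nonneg (c^2 - 1/2), sq_nonneg (c - 1/2)]

private lemma aux_pow4_bound (c e : ℝ) (hc : 0 ≤ c) (he : 0 ≤ e) :
    (c + e + 1)^4 ≤ 27*(1 + c^4 + e^4) := by
  have h1 : (c+e+1)^2 ≤ 3*(c^2+e^2+1) := by
    nlinarith [sq_nonneg (c-e), sq_nonneg (c-1), sq_nonneg (e-1)]
  have h2 : ((c+e+1)^2)^2 ≤ (3*(c^2+e^2+1))^2 :=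
    pow_le_pow_left₀ (by positivity) h1 2
  have h3 : (c^2+e^2+1)^2 ≤ 3*(c^4+e^4+1) := by
    nlinarith [sq_nonneg (c^2-e^2), sq_nonneg (c^2-1), sq_nonneg (e^2-1)]
  nlinarith [h2, h3]

private lemma add_pow4_le {a b : ℝ} (ha : 0 ≤ a) (hb : 0 ≤ b) : (a+b)^4 ≤ 8*(a^4+b^4) := by
  have h1 : (a+b)^2 ≤ 2*(a^2+b^2) := by nlinarith [sq_nonneg (a-b)]
  have h2 : ((a+b)^2)^2 ≤ (2*(a^2+b^2))^2 := pow_le_pow_left₀ (by positivity) h1 2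
  nlinarith [sq_nonneg (a^2-b^2)]

private lemma abs_mul_le_of_le {a b M N : ℝ} (ha : |a| ≤ M) (hb : |b| ≤ N) : |a*b| ≤ M*N := by
  rw [abs_mul]; exact mul_le_mul ha hb (abs_nonneg _) ((abs_nonneg a).trans ha)

private lemma bnd1 {a M : ℝ} (hM : 1 ≤ M) (ha : |a| ≤ M) : |a| ≤ M^4 := by
  have h1 : M^1 ≤ M^4 := pow_le_pow_right₀ hM (by norm_num)
  exact ha.trans (by simpa using h1)

private lemma bnd2 {a b M : ℝ} (hM : 1 ≤ M) (ha : |a| ≤ M) (hb : |b| ≤ M) : |a*b| ≤ M^4 := by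
  have h := abs_mul_le_of_le ha hb
  have h1 : M^2 ≤ M^4 := pow_le_pow_right₀ hM (by norm_num)
  calc |a*b| ≤ M*M := h
    _ = M^2 := by ring
    _ ≤ M^4 := h1

private lemma bnd3 {a b c M : ℝ} (hM : 1 ≤ M) (ha : |a| ≤ M) (hb : |b| ≤ M) (hc : |c| ≤ M) :
    |a*b*c| ≤ M^4 := by
  have h := abs_mul_le_of_le (abs_mul_le_of_le ha hb) hc
  have h1 : M^3 ≤ M^4 := pow_le_pow_right₀ hM (by norm_num)
  calc |a*b*c| ≤ M*M*M := h
    _ = M^3 := by ring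
    _ ≤ M^4 := h1

private lemma bnd4 {a b c e M : ℝ} (ha : |a| ≤ M) (hb : |b| ≤ M) (hc : |c| ≤ M)
    (he : |e| ≤ M) : |a*b*(c*e)| ≤ M^4 := by
  have h := abs_mul_le_of_le (abs_mul_le_of_le ha hb) (abs_mul_le_of_le hc he)
  calc |a*b*(c*e)| ≤ M*M*(M*M) := h
    _ = M^4 := by ring

private lemma habs_sub (a b : ℝ) : |a - b| ≤ |a| + |b| := by
  rw [sub_eq_add_neg]
  exact (abs_add_le _ _).trans (by rw [abs_neg])

private lemma norm_sq_eq {d : ℕ} (x : EuclideanSpace ℝ (Fin d)) : ‖x‖^2 = ∑ i, x i * x i := by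
  rw [← real_inner_self_eq_norm_sq]
  simp only [PiLp.inner_apply, RCLike.inner_apply', conj_trivial]

private lemma inner_eq {d : ℕ} (x y : EuclideanSpace ℝ (Fin d)) : ⟪x, y⟫ = ∑ i, x i * y i := by
  simp only [PiLp.inner_apply, RCLike.inner_apply', conj_trivial]

private lemma coord_le_norm {d : ℕ} (x : EuclideanSpace ℝ (Fin d)) (i : Fin d) : |x i| ≤ ‖x‖ := by
  have h2 : x i * x i ≤ ‖x‖^2 := by
    rw [norm_sq_eq]
    exact Finset.single_le_sum (fun j _ => mul_self_nonneg (x j)) (Finset.mem_univ i)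
  calc |x i| = Real.sqrt (x i * x i) := by rw [Real.sqrt_mul_self_eq_abs]
    _ ≤ Real.sqrt (‖x‖^2) := Real.sqrt_le_sqrt h2
    _ = ‖x‖ := by rw [Real.sqrt_sq (norm_nonneg x)]

private lemma sum_sum_mul_const {d : ℕ} (c : ℝ) (f : Fin d → Fin d → ℝ) :
    ∑ i, ∑ j, c * f i j = c * ∑ i, ∑ j, f i j := by
  rw [Finset.mul_sum]
  exact Finset.sum_congr rfl fun i _ => by rw [Finset.mul_sum]

private lemma final_algebra {d : ℕ} (Iq G A B K : Fin d → Fin d → ℝ) :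
    ∑ i, ∑ j, ((2*Iq i j + 2*(A i i*B j j + K i j*K i j + K i j*K i j))
        - (2*G i j + 2*(K i i*K j j + A i j*B i j + K i j*K j i)))
      = 2*(∑ i, ∑ j, (Iq i j - G i j)) + (∑ i, ∑ j, (K i j - K j i)*(K i j - K j i))
        + 2*((∑ i, A i i)*(∑ i, B i i) - (∑ i, K i i)^2
            - ∑ i, ∑ j, A i j * B i j + ∑ i, ∑ j, K i j * K i j) := by
  have hc : (∑ i, ∑ j, K j i * K j i) = ∑ i, ∑ j, K i j * K i j := Finset.sum_comm
  rw [pow_two]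
  simp only [Finset.sum_mul_sum]
  rw [show ∑ i, ∑ j, ((2*Iq i j + 2*(A i i*B j j + K i j*K i j + K i j*K i j))
        - (2*G i j + 2*(K i i*K j j + A i j*B i j + K i j*K j i)))
      = ∑ i, ∑ j, ((2*(Iq i j - G i j) + (K i j - K j i)*(K i j - K j i)
          + 2*(A i i*B j j) - 2*(K i i*K j j) - 2*(A i j*B i j) + 2*(K i j*K i j))
        + (K i j*K i j - K j i*K j i)) from
    Finset.sum_congr rfl fun i _ => Finset.sum_congr rfl fun j _ => by ring]
  simp only [Finset.sum_add_distrib, Finset.sum_sub_distrib, sum_sum_mul_const]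
  rw [hc]
  ring

private lemma T_algebra {d : ℕ} (A B K : Fin d → Fin d → ℝ) :
    ∑ i, ∑ j, (2*(A i i*B j j) + 2*(A j j*B i i) - 4*(A i j*B i j)
        + 2*(K i j*K i j) + 2*(K j i*K j i) - 4*(K i i*K j j))
    = 4*((∑ i, ∑ j, A i i * B j j) - (∑ i, ∑ j, K i i * K j j)
        - (∑ i, ∑ j, A i j * B i j) + ∑ i, ∑ j, K i j * K i j) := by
  have hc1 : (∑ i, ∑ j, A j j * B i i) = ∑ i, ∑ j, A i i * B j j := Finset.sum_comm
  have hc2 : (∑ i, ∑ j, K j i * K j i) = ∑ i, ∑ j, K i j * K i j := Finset.sum_comm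
  simp only [Finset.sum_add_distrib, Finset.sum_sub_distrib, sum_sum_mul_const]
  rw [hc1, hc2]
  ring

/-- Exact decomposition of the average square parallelogram area:
for centered random vectors `U, V` in `ℝ^d` with finite fourth moments and `(U_*,V_*)`
an independent copy of `(U,V)`:
`𝔼(|U−U_*|²|V−V_*|² − ((U−U_*)·(V−V_*))²)
  = 2𝔼(|U|²|V|² − (U·V)²) + Tr((C_{U,V}−C_{V,U})(C_{V,U}−C_{U,V}))
    + 2(Tr C_{U,U} · Tr C_{V,V} − (Tr C_{U,V})² − Tr(C_{U,U}C_{V,V}) + Tr(C_{U,V}C_{V,U}))`,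
and each of the three summands is nonnegative. -/
theorem stmt4 {d : ℕ} {Ω : Type*} [MeasurableSpace Ω] (μ : Measure Ω)
    [IsProbabilityMeasure μ]
    (U V Us Vs : Ω → EuclideanSpace ℝ (Fin d))
    (hUm : Measurable U) (hVm : Measurable V) (hUsm : Measurable Us) (hVsm : Measurable Vs)
    (hUcen : ∫ ω, U ω ∂μ = 0) (hVcen : ∫ ω, V ω ∂μ = 0)
    (hU4 : Integrable (fun ω => ‖U ω‖ ^ 4) μ) (hV4 : Integrable (fun ω => ‖V ω‖ ^ 4) μ)
    (hindep : IndepFun (fun ω => (U ω, V ω)) (fun ω => (Us ω, Vs ω)) μ)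
    (hcopy : Measure.map (fun ω => (U ω, V ω)) μ = Measure.map (fun ω => (Us ω, Vs ω)) μ) :
    (∫ ω, (‖U ω - Us ω‖ ^ 2 * ‖V ω - Vs ω‖ ^ 2 - ⟪U ω - Us ω, V ω - Vs ω⟫ ^ 2) ∂μ =
        2 * (∫ ω, (‖U ω‖ ^ 2 * ‖V ω‖ ^ 2 - ⟪U ω, V ω⟫ ^ 2) ∂μ)
        + ((covMatrix μ U V - covMatrix μ V U) * (covMatrix μ V U - covMatrix μ U V)).trace
        + 2 * ((covMatrix μ U U).trace * (covMatrix μ V V).trace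
            - (covMatrix μ U V).trace ^ 2
            - (covMatrix μ U U * covMatrix μ V V).trace
            + (covMatrix μ U V * covMatrix μ V U).trace))
    ∧ 0 ≤ ∫ ω, (‖U ω‖ ^ 2 * ‖V ω‖ ^ 2 - ⟪U ω, V ω⟫ ^ 2) ∂μ
    ∧ 0 ≤ ((covMatrix μ U V - covMatrix μ V U) * (covMatrix μ V U - covMatrix μ U V)).trace
    ∧ 0 ≤ (covMatrix μ U U).trace * (covMatrix μ V V).trace
            - (covMatrix μ U V).trace ^ 2
            - (covMatrix μ U U * covMatrix μ V V).trace
            + (covMatrix μ U V * covMatrix μ V U).trace := by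
  classical
  have hUVm : Measurable (fun ω => (U ω, V ω)) := hUm.prodMk hVm
  have hUsVsm : Measurable (fun ω => (Us ω, Vs ω)) := hUsm.prodMk hVsm
  -- coordinate measurability
  have mU : ∀ i, Measurable (fun ω => U ω i) := fun i =>
    ((EuclideanSpace.proj i : EuclideanSpace ℝ (Fin d) →L[ℝ] ℝ).continuous.measurable).comp hUm
  have mV : ∀ i, Measurable (fun ω => V ω i) := fun i =>
    ((EuclideanSpace.proj i : EuclideanSpace ℝ (Fin d) →L[ℝ] ℝ).continuous.measurable).comp hVm
  have mUs : ∀ i, Measurable (fun ω => Us ω i) := fun i =>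
    ((EuclideanSpace.proj i : EuclideanSpace ℝ (Fin d) →L[ℝ] ℝ).continuous.measurable).comp hUsm
  have mVs : ∀ i, Measurable (fun ω => Vs ω i) := fun i =>
    ((EuclideanSpace.proj i : EuclideanSpace ℝ (Fin d) →L[ℝ] ℝ).continuous.measurable).comp hVsm
  have mpX : ∀ i, Measurable
      (fun p : EuclideanSpace ℝ (Fin d) × EuclideanSpace ℝ (Fin d) => p.1 i) := fun i =>
    ((EuclideanSpace.proj i : EuclideanSpace ℝ (Fin d) →L[ℝ] ℝ).continuous.measurable).comp
      measurable_fst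
  have mpY : ∀ i, Measurable
      (fun p : EuclideanSpace ℝ (Fin d) × EuclideanSpace ℝ (Fin d) => p.2 i) := fun i =>
    ((EuclideanSpace.proj i : EuclideanSpace ℝ (Fin d) →L[ℝ] ℝ).continuous.measurable).comp
      measurable_snd
  -- coordinate bounds
  have hNp : ∀ p : EuclideanSpace ℝ (Fin d) × EuclideanSpace ℝ (Fin d),
      (1:ℝ) ≤ ‖p.1‖ + ‖p.2‖ + 1 := fun p => by
    have := norm_nonneg p.1; have := norm_nonneg p.2; linarith
  have bX : ∀ (p : EuclideanSpace ℝ (Fin d) × EuclideanSpace ℝ (Fin d)) (i : Fin d),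
      |p.1 i| ≤ ‖p.1‖ + ‖p.2‖ + 1 := fun p i => by
    have := coord_le_norm p.1 i; have := norm_nonneg p.2; linarith
  have bY : ∀ (p : EuclideanSpace ℝ (Fin d) × EuclideanSpace ℝ (Fin d)) (i : Fin d),
      |p.2 i| ≤ ‖p.1‖ + ‖p.2‖ + 1 := fun p i => by
    have := coord_le_norm p.2 i; have := norm_nonneg p.1; linarith
  -- integrability master lemma (unstarred pair)
  have hBint : Integrable (fun ω => 27*(1 + ‖U ω‖^4 + ‖V ω‖^4)) μ :=
    ((((integrable_const (1:ℝ)).add hU4).add hV4).const_mul 27)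
  have master : ∀ (r : EuclideanSpace ℝ (Fin d) × EuclideanSpace ℝ (Fin d) → ℝ), Measurable r →
      (∀ p, |r p| ≤ (‖p.1‖ + ‖p.2‖ + 1)^4) → Integrable (fun ω => r (U ω, V ω)) μ := by
    intro r hrm hrb
    refine hBint.mono' ((hrm.comp hUVm).aestronglyMeasurable) ?_
    filter_upwards with ω
    rw [Real.norm_eq_abs]
    exact (hrb (U ω, V ω)).trans
      (aux_pow4_bound ‖U ω‖ ‖V ω‖ (norm_nonneg _) (norm_nonneg _))
  -- copy transfers
  have copyInt : ∀ (ψ : EuclideanSpace ℝ (Fin d) × EuclideanSpace ℝ (Fin d) → ℝ), Measurable ψ →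
      ∫ ω, ψ (Us ω, Vs ω) ∂μ = ∫ ω, ψ (U ω, V ω) ∂μ := by
    intro ψ hψ
    rw [← integral_map hUsVsm.aemeasurable hψ.aestronglyMeasurable, ← hcopy,
      integral_map hUVm.aemeasurable hψ.aestronglyMeasurable]
  have copyIntg : ∀ (ψ : EuclideanSpace ℝ (Fin d) × EuclideanSpace ℝ (Fin d) → ℝ), Measurable ψ →
      Integrable (fun ω => ψ (U ω, V ω)) μ → Integrable (fun ω => ψ (Us ω, Vs ω)) μ := by
    intro ψ hψ h
    have h1 : Integrable ψ (Measure.map (fun ω => (U ω, V ω)) μ) :=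
      (integrable_map_measure hψ.aestronglyMeasurable hUVm.aemeasurable).mpr h
    rw [hcopy] at h1
    exact (integrable_map_measure hψ.aestronglyMeasurable hUsVsm.aemeasurable).mp h1
  have keyVal : ∀ (φ ψ : EuclideanSpace ℝ (Fin d) × EuclideanSpace ℝ (Fin d) → ℝ),
      Measurable φ → Measurable ψ →
      ∫ ω, φ (U ω, V ω) * ψ (Us ω, Vs ω) ∂μ
        = (∫ ω, φ (U ω, V ω) ∂μ) * ∫ ω, ψ (U ω, V ω) ∂μ := by
    intro φ ψ hφ hψ
    have hi : IndepFun (fun ω => φ (U ω, V ω)) (fun ω => ψ (Us ω, Vs ω)) μ := hindep.comp hφ hψ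
    calc ∫ ω, φ (U ω, V ω) * ψ (Us ω, Vs ω) ∂μ
        = integral μ ((fun ω => φ (U ω, V ω)) * (fun ω => ψ (Us ω, Vs ω))) := rfl
      _ = (∫ ω, φ (U ω, V ω) ∂μ) * ∫ ω, ψ (Us ω, Vs ω) ∂μ :=
          hi.integral_mul_eq_mul_integral ((hφ.comp hUVm).aestronglyMeasurable)
            ((hψ.comp hUsVsm).aestronglyMeasurable)
      _ = (∫ ω, φ (U ω, V ω) ∂μ) * ∫ ω, ψ (U ω, V ω) ∂μ := by rw [copyInt ψ hψ]
  have keyIntg : ∀ (φ ψ : EuclideanSpace ℝ (Fin d) × EuclideanSpace ℝ (Fin d) → ℝ),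
      Measurable φ → Measurable ψ →
      Integrable (fun ω => φ (U ω, V ω)) μ → Integrable (fun ω => ψ (U ω, V ω)) μ →
      Integrable (fun ω => φ (U ω, V ω) * ψ (Us ω, Vs ω)) μ := by
    intro φ ψ hφ hψ hφi hψi
    exact (hindep.comp hφ hψ).integrable_mul hφi (copyIntg ψ hψ hψi)
  -- centering of coordinates
  have hUint : Integrable U μ := by
    refine ((integrable_const (1:ℝ)).add hU4).mono' hUm.aestronglyMeasurable ?_
    filter_upwards with ω
    exact aux_le_pow4
  have hVint : Integrable V μ := by
    refine ((integrable_const (1:ℝ)).add hV4).mono' hVm.aestronglyMeasurable ?_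
    filter_upwards with ω
    exact aux_le_pow4
  have hUc : ∀ i, ∫ ω, U ω i ∂μ = 0 := by
    intro i
    have h := (EuclideanSpace.proj i :
      EuclideanSpace ℝ (Fin d) →L[ℝ] ℝ).integral_comp_comm hUint
    rw [hUcen] at h
    simpa using h
  have hVc : ∀ i, ∫ ω, V ω i ∂μ = 0 := by
    intro i
    have h := (EuclideanSpace.proj i :
      EuclideanSpace ℝ (Fin d) →L[ℝ] ℝ).integral_comp_comm hVint
    rw [hVcen] at h
    simpa using h
  -- The key quartic moment computation for independent copies
  have quart : ∀ (f g h k : EuclideanSpace ℝ (Fin d) × EuclideanSpace ℝ (Fin d) → ℝ),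
      Measurable f → Measurable g → Measurable h → Measurable k →
      (∀ p, |f p| ≤ ‖p.1‖ + ‖p.2‖ + 1) → (∀ p, |g p| ≤ ‖p.1‖ + ‖p.2‖ + 1) →
      (∀ p, |h p| ≤ ‖p.1‖ + ‖p.2‖ + 1) → (∀ p, |k p| ≤ ‖p.1‖ + ‖p.2‖ + 1) →
      (∫ ω, f (U ω, V ω) ∂μ) = 0 → (∫ ω, g (U ω, V ω) ∂μ) = 0 →
      (∫ ω, h (U ω, V ω) ∂μ) = 0 → (∫ ω, k (U ω, V ω) ∂μ) = 0 →
      ∫ ω, (f (U ω, V ω) - f (Us ω, Vs ω)) * (g (U ω, V ω) - g (Us ω, Vs ω)) *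
          ((h (U ω, V ω) - h (Us ω, Vs ω)) * (k (U ω, V ω) - k (Us ω, Vs ω))) ∂μ
        = 2 * (∫ ω, f (U ω, V ω) * g (U ω, V ω) * (h (U ω, V ω) * k (U ω, V ω)) ∂μ)
          + 2 * ((∫ ω, f (U ω, V ω) * g (U ω, V ω) ∂μ) * (∫ ω, h (U ω, V ω) * k (U ω, V ω) ∂μ)
            + (∫ ω, f (U ω, V ω) * h (U ω, V ω) ∂μ) * (∫ ω, g (U ω, V ω) * k (U ω, V ω) ∂μ)
            + (∫ ω, f (U ω, V ω) * k (U ω, V ω) ∂μ) * (∫ ω, g (U ω, V ω) * h (U ω, V ω) ∂μ)) := by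
    intro f g h k hfm hgm hhm hkm hfb hgb hhb hkb hf0 hg0 hh0 hk0
    -- integrability of products
    have If : Integrable (fun ω => f (U ω, V ω)) μ :=
      master f hfm (fun p => bnd1 (hNp p) (hfb p))
    have Ig : Integrable (fun ω => g (U ω, V ω)) μ :=
      master g hgm (fun p => bnd1 (hNp p) (hgb p))
    have Ih : Integrable (fun ω => h (U ω, V ω)) μ :=
      master h hhm (fun p => bnd1 (hNp p) (hhb p))
    have Ik : Integrable (fun ω => k (U ω, V ω)) μ :=
      master k hkm (fun p => bnd1 (hNp p) (hkb p))
    have Ifg : Integrable (fun ω => f (U ω, V ω) * g (U ω, V ω)) μ :=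
      master (fun p => f p * g p) (hfm.mul hgm) (fun p => bnd2 (hNp p) (hfb p) (hgb p))
    have Ifh : Integrable (fun ω => f (U ω, V ω) * h (U ω, V ω)) μ :=
      master (fun p => f p * h p) (hfm.mul hhm) (fun p => bnd2 (hNp p) (hfb p) (hhb p))
    have Ifk : Integrable (fun ω => f (U ω, V ω) * k (U ω, V ω)) μ :=
      master (fun p => f p * k p) (hfm.mul hkm) (fun p => bnd2 (hNp p) (hfb p) (hkb p))
    have Igh : Integrable (fun ω => g (U ω, V ω) * h (U ω, V ω)) μ :=
      master (fun p => g p * h p) (hgm.mul hhm) (fun p => bnd2 (hNp p) (hgb p) (hhb p))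
    have Igk : Integrable (fun ω => g (U ω, V ω) * k (U ω, V ω)) μ :=
      master (fun p => g p * k p) (hgm.mul hkm) (fun p => bnd2 (hNp p) (hgb p) (hkb p))
    have Ihk : Integrable (fun ω => h (U ω, V ω) * k (U ω, V ω)) μ :=
      master (fun p => h p * k p) (hhm.mul hkm) (fun p => bnd2 (hNp p) (hhb p) (hkb p))
    have Ifgh : Integrable (fun ω => f (U ω, V ω) * g (U ω, V ω) * h (U ω, V ω)) μ :=
      master (fun p => f p * g p * h p) ((hfm.mul hgm).mul hhm)
        (fun p => bnd3 (hNp p) (hfb p) (hgb p) (hhb p))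
    have Ifgk : Integrable (fun ω => f (U ω, V ω) * g (U ω, V ω) * k (U ω, V ω)) μ :=
      master (fun p => f p * g p * k p) ((hfm.mul hgm).mul hkm)
        (fun p => bnd3 (hNp p) (hfb p) (hgb p) (hkb p))
    have Ifhk : Integrable (fun ω => f (U ω, V ω) * h (U ω, V ω) * k (U ω, V ω)) μ :=
      master (fun p => f p * h p * k p) ((hfm.mul hhm).mul hkm)
        (fun p => bnd3 (hNp p) (hfb p) (hhb p) (hkb p))
    have Ighk : Integrable (fun ω => g (U ω, V ω) * h (U ω, V ω) * k (U ω, V ω)) μ :=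
      master (fun p => g p * h p * k p) ((hgm.mul hhm).mul hkm)
        (fun p => bnd3 (hNp p) (hgb p) (hhb p) (hkb p))
    have Ifghk : Integrable (fun ω => f (U ω, V ω) * g (U ω, V ω) * (h (U ω, V ω) * k (U ω, V ω))) μ :=
      master (fun p => f p * g p * (h p * k p)) ((hfm.mul hgm).mul (hhm.mul hkm))
        (fun p => bnd4 (hfb p) (hgb p) (hhb p) (hkb p))
    -- integrability of the 16 monomials
    have j1 := Ifghk
    have j2 : Integrable (fun ω => f (U ω, V ω) * g (U ω, V ω) * h (U ω, V ω) * k (Us ω, Vs ω)) μ :=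
      keyIntg (fun p => f p * g p * h p) k ((hfm.mul hgm).mul hhm) hkm Ifgh Ik
    have j3 : Integrable (fun ω => f (U ω, V ω) * g (U ω, V ω) * k (U ω, V ω) * h (Us ω, Vs ω)) μ :=
      keyIntg (fun p => f p * g p * k p) h ((hfm.mul hgm).mul hkm) hhm Ifgk Ih
    have j4 : Integrable (fun ω => f (U ω, V ω) * g (U ω, V ω) * (h (Us ω, Vs ω) * k (Us ω, Vs ω))) μ :=
      keyIntg (fun p => f p * g p) (fun p => h p * k p) (hfm.mul hgm) (hhm.mul hkm) Ifg Ihk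
    have j5 : Integrable (fun ω => f (U ω, V ω) * h (U ω, V ω) * k (U ω, V ω) * g (Us ω, Vs ω)) μ :=
      keyIntg (fun p => f p * h p * k p) g ((hfm.mul hhm).mul hkm) hgm Ifhk Ig
    have j6 : Integrable (fun ω => f (U ω, V ω) * h (U ω, V ω) * (g (Us ω, Vs ω) * k (Us ω, Vs ω))) μ :=
      keyIntg (fun p => f p * h p) (fun p => g p * k p) (hfm.mul hhm) (hgm.mul hkm) Ifh Igk
    have j7 : Integrable (fun ω => f (U ω, V ω) * k (U ω, V ω) * (g (Us ω, Vs ω) * h (Us ω, Vs ω))) μ :=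
      keyIntg (fun p => f p * k p) (fun p => g p * h p) (hfm.mul hkm) (hgm.mul hhm) Ifk Igh
    have j8 : Integrable (fun ω => f (U ω, V ω) * (g (Us ω, Vs ω) * h (Us ω, Vs ω) * k (Us ω, Vs ω))) μ :=
      keyIntg f (fun p => g p * h p * k p) hfm ((hgm.mul hhm).mul hkm) If Ighk
    have j9 : Integrable (fun ω => g (U ω, V ω) * h (U ω, V ω) * k (U ω, V ω) * f (Us ω, Vs ω)) μ :=
      keyIntg (fun p => g p * h p * k p) f ((hgm.mul hhm).mul hkm) hfm Ighk If
    have j10 : Integrable (fun ω => g (U ω, V ω) * h (U ω, V ω) * (f (Us ω, Vs ω) * k (Us ω, Vs ω))) μ :=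
      keyIntg (fun p => g p * h p) (fun p => f p * k p) (hgm.mul hhm) (hfm.mul hkm) Igh Ifk
    have j11 : Integrable (fun ω => g (U ω, V ω) * k (U ω, V ω) * (f (Us ω, Vs ω) * h (Us ω, Vs ω))) μ :=
      keyIntg (fun p => g p * k p) (fun p => f p * h p) (hgm.mul hkm) (hfm.mul hhm) Igk Ifh
    have j12 : Integrable (fun ω => h (U ω, V ω) * k (U ω, V ω) * (f (Us ω, Vs ω) * g (Us ω, Vs ω))) μ :=
      keyIntg (fun p => h p * k p) (fun p => f p * g p) (hhm.mul hkm) (hfm.mul hgm) Ihk Ifg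
    have j13 : Integrable (fun ω => k (U ω, V ω) * (f (Us ω, Vs ω) * g (Us ω, Vs ω) * h (Us ω, Vs ω))) μ :=
      keyIntg k (fun p => f p * g p * h p) hkm ((hfm.mul hgm).mul hhm) Ik Ifgh
    have j14 : Integrable (fun ω => h (U ω, V ω) * (f (Us ω, Vs ω) * g (Us ω, Vs ω) * k (Us ω, Vs ω))) μ :=
      keyIntg h (fun p => f p * g p * k p) hhm ((hfm.mul hgm).mul hkm) Ih Ifgk
    have j15 : Integrable (fun ω => g (U ω, V ω) * (f (Us ω, Vs ω) * h (Us ω, Vs ω) * k (Us ω, Vs ω))) μ :=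
      keyIntg g (fun p => f p * h p * k p) hgm ((hfm.mul hhm).mul hkm) Ig Ifhk
    have j16 : Integrable (fun ω => f (Us ω, Vs ω) * g (Us ω, Vs ω) * (h (Us ω, Vs ω) * k (Us ω, Vs ω))) μ :=
      copyIntg (fun p => f p * g p * (h p * k p)) ((hfm.mul hgm).mul (hhm.mul hkm)) Ifghk
    -- values of the 16 monomials
    have v2 : ∫ ω, f (U ω, V ω) * g (U ω, V ω) * h (U ω, V ω) * k (Us ω, Vs ω) ∂μ = 0 := by
      have hv := keyVal (fun p => f p * g p * h p) k ((hfm.mul hgm).mul hhm) hkm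
      rw [hk0, mul_zero] at hv; exact hv
    have v3 : ∫ ω, f (U ω, V ω) * g (U ω, V ω) * k (U ω, V ω) * h (Us ω, Vs ω) ∂μ = 0 := by
      have hv := keyVal (fun p => f p * g p * k p) h ((hfm.mul hgm).mul hkm) hhm
      rw [hh0, mul_zero] at hv; exact hv
    have v4 : ∫ ω, f (U ω, V ω) * g (U ω, V ω) * (h (Us ω, Vs ω) * k (Us ω, Vs ω)) ∂μ
        = (∫ ω, f (U ω, V ω) * g (U ω, V ω) ∂μ) * ∫ ω, h (U ω, V ω) * k (U ω, V ω) ∂μ :=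
      keyVal (fun p => f p * g p) (fun p => h p * k p) (hfm.mul hgm) (hhm.mul hkm)
    have v5 : ∫ ω, f (U ω, V ω) * h (U ω, V ω) * k (U ω, V ω) * g (Us ω, Vs ω) ∂μ = 0 := by
      have hv := keyVal (fun p => f p * h p * k p) g ((hfm.mul hhm).mul hkm) hgm
      rw [hg0, mul_zero] at hv; exact hv
    have v6 : ∫ ω, f (U ω, V ω) * h (U ω, V ω) * (g (Us ω, Vs ω) * k (Us ω, Vs ω)) ∂μ
        = (∫ ω, f (U ω, V ω) * h (U ω, V ω) ∂μ) * ∫ ω, g (U ω, V ω) * k (U ω, V ω) ∂μ :=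
      keyVal (fun p => f p * h p) (fun p => g p * k p) (hfm.mul hhm) (hgm.mul hkm)
    have v7 : ∫ ω, f (U ω, V ω) * k (U ω, V ω) * (g (Us ω, Vs ω) * h (Us ω, Vs ω)) ∂μ
        = (∫ ω, f (U ω, V ω) * k (U ω, V ω) ∂μ) * ∫ ω, g (U ω, V ω) * h (U ω, V ω) ∂μ :=
      keyVal (fun p => f p * k p) (fun p => g p * h p) (hfm.mul hkm) (hgm.mul hhm)
    have v8 : ∫ ω, f (U ω, V ω) * (g (Us ω, Vs ω) * h (Us ω, Vs ω) * k (Us ω, Vs ω)) ∂μ = 0 := by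
      have hv := keyVal f (fun p => g p * h p * k p) hfm ((hgm.mul hhm).mul hkm)
      rw [hf0, zero_mul] at hv; exact hv
    have v9 : ∫ ω, g (U ω, V ω) * h (U ω, V ω) * k (U ω, V ω) * f (Us ω, Vs ω) ∂μ = 0 := by
      have hv := keyVal (fun p => g p * h p * k p) f ((hgm.mul hhm).mul hkm) hfm
      rw [hf0, mul_zero] at hv; exact hv
    have v10 : ∫ ω, g (U ω, V ω) * h (U ω, V ω) * (f (Us ω, Vs ω) * k (Us ω, Vs ω)) ∂μ
        = (∫ ω, g (U ω, V ω) * h (U ω, V ω) ∂μ) * ∫ ω, f (U ω, V ω) * k (U ω, V ω) ∂μ :=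
      keyVal (fun p => g p * h p) (fun p => f p * k p) (hgm.mul hhm) (hfm.mul hkm)
    have v11 : ∫ ω, g (U ω, V ω) * k (U ω, V ω) * (f (Us ω, Vs ω) * h (Us ω, Vs ω)) ∂μ
        = (∫ ω, g (U ω, V ω) * k (U ω, V ω) ∂μ) * ∫ ω, f (U ω, V ω) * h (U ω, V ω) ∂μ :=
      keyVal (fun p => g p * k p) (fun p => f p * h p) (hgm.mul hkm) (hfm.mul hhm)
    have v12 : ∫ ω, h (U ω, V ω) * k (U ω, V ω) * (f (Us ω, Vs ω) * g (Us ω, Vs ω)) ∂μ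
        = (∫ ω, h (U ω, V ω) * k (U ω, V ω) ∂μ) * ∫ ω, f (U ω, V ω) * g (U ω, V ω) ∂μ :=
      keyVal (fun p => h p * k p) (fun p => f p * g p) (hhm.mul hkm) (hfm.mul hgm)
    have v13 : ∫ ω, k (U ω, V ω) * (f (Us ω, Vs ω) * g (Us ω, Vs ω) * h (Us ω, Vs ω)) ∂μ = 0 := by
      have hv := keyVal k (fun p => f p * g p * h p) hkm ((hfm.mul hgm).mul hhm)
      rw [hk0, zero_mul] at hv; exact hv
    have v14 : ∫ ω, h (U ω, V ω) * (f (Us ω, Vs ω) * g (Us ω, Vs ω) * k (Us ω, Vs ω)) ∂μ = 0 := by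
      have hv := keyVal h (fun p => f p * g p * k p) hhm ((hfm.mul hgm).mul hkm)
      rw [hh0, zero_mul] at hv; exact hv
    have v15 : ∫ ω, g (U ω, V ω) * (f (Us ω, Vs ω) * h (Us ω, Vs ω) * k (Us ω, Vs ω)) ∂μ = 0 := by
      have hv := keyVal g (fun p => f p * h p * k p) hgm ((hfm.mul hhm).mul hkm)
      rw [hg0, zero_mul] at hv; exact hv
    have v16 : ∫ ω, f (Us ω, Vs ω) * g (Us ω, Vs ω) * (h (Us ω, Vs ω) * k (Us ω, Vs ω)) ∂μ
        = ∫ ω, f (U ω, V ω) * g (U ω, V ω) * (h (U ω, V ω) * k (U ω, V ω)) ∂μ :=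
      copyInt (fun p => f p * g p * (h p * k p)) ((hfm.mul hgm).mul (hhm.mul hkm))
    -- expand the product
    have hexp : (fun ω => (f (U ω, V ω) - f (Us ω, Vs ω)) * (g (U ω, V ω) - g (Us ω, Vs ω)) *
          ((h (U ω, V ω) - h (Us ω, Vs ω)) * (k (U ω, V ω) - k (Us ω, Vs ω))))
        = fun ω =>
          f (U ω, V ω) * g (U ω, V ω) * (h (U ω, V ω) * k (U ω, V ω))
          - f (U ω, V ω) * g (U ω, V ω) * h (U ω, V ω) * k (Us ω, Vs ω)
          - f (U ω, V ω) * g (U ω, V ω) * k (U ω, V ω) * h (Us ω, Vs ω)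
          + f (U ω, V ω) * g (U ω, V ω) * (h (Us ω, Vs ω) * k (Us ω, Vs ω))
          - f (U ω, V ω) * h (U ω, V ω) * k (U ω, V ω) * g (Us ω, Vs ω)
          + f (U ω, V ω) * h (U ω, V ω) * (g (Us ω, Vs ω) * k (Us ω, Vs ω))
          + f (U ω, V ω) * k (U ω, V ω) * (g (Us ω, Vs ω) * h (Us ω, Vs ω))
          - f (U ω, V ω) * (g (Us ω, Vs ω) * h (Us ω, Vs ω) * k (Us ω, Vs ω))
          - g (U ω, V ω) * h (U ω, V ω) * k (U ω, V ω) * f (Us ω, Vs ω)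
          + g (U ω, V ω) * h (U ω, V ω) * (f (Us ω, Vs ω) * k (Us ω, Vs ω))
          + g (U ω, V ω) * k (U ω, V ω) * (f (Us ω, Vs ω) * h (Us ω, Vs ω))
          + h (U ω, V ω) * k (U ω, V ω) * (f (Us ω, Vs ω) * g (Us ω, Vs ω))
          - k (U ω, V ω) * (f (Us ω, Vs ω) * g (Us ω, Vs ω) * h (Us ω, Vs ω))
          - h (U ω, V ω) * (f (Us ω, Vs ω) * g (Us ω, Vs ω) * k (Us ω, Vs ω))
          - g (U ω, V ω) * (f (Us ω, Vs ω) * h (Us ω, Vs ω) * k (Us ω, Vs ω))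
          + f (Us ω, Vs ω) * g (Us ω, Vs ω) * (h (Us ω, Vs ω) * k (Us ω, Vs ω)) :=
      funext fun ω => by ring
    have P2 : Integrable (fun ω => f (U ω, V ω) * g (U ω, V ω) * (h (U ω, V ω) * k (U ω, V ω)) - f (U ω, V ω) * g (U ω, V ω) * h (U ω, V ω) * k (Us ω, Vs ω)) μ := j1.sub j2
    have P3 : Integrable (fun ω => f (U ω, V ω) * g (U ω, V ω) * (h (U ω, V ω) * k (U ω, V ω)) - f (U ω, V ω) * g (U ω, V ω) * h (U ω, V ω) * k (Us ω, Vs ω) - f (U ω, V ω) * g (U ω, V ω) * k (U ω, V ω) * h (Us ω, Vs ω)) μ := P2.sub j3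
    have P4 : Integrable (fun ω => f (U ω, V ω) * g (U ω, V ω) * (h (U ω, V ω) * k (U ω, V ω)) - f (U ω, V ω) * g (U ω, V ω) * h (U ω, V ω) * k (Us ω, Vs ω) - f (U ω, V ω) * g (U ω, V ω) * k (U ω, V ω) * h (Us ω, Vs ω) + f (U ω, V ω) * g (U ω, V ω) * (h (Us ω, Vs ω) * k (Us ω, Vs ω))) μ := P3.add j4
    have P5 : Integrable (fun ω => f (U ω, V ω) * g (U ω, V ω) * (h (U ω, V ω) * k (U ω, V ω)) - f (U ω, V ω) * g (U ω, V ω) * h (U ω, V ω) * k (Us ω, Vs ω) - f (U ω, V ω) * g (U ω, V ω) * k (U ω, V ω) * h (Us ω, Vs ω) + f (U ω, V ω) * g (U ω, V ω) * (h (Us ω, Vs ω) * k (Us ω, Vs ω)) - f (U ω, V ω) * h (U ω, V ω) * k (U ω, V ω) * g (Us ω, Vs ω)) μ := P4.sub j5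
    have P6 : Integrable (fun ω => f (U ω, V ω) * g (U ω, V ω) * (h (U ω, V ω) * k (U ω, V ω)) - f (U ω, V ω) * g (U ω, V ω) * h (U ω, V ω) * k (Us ω, Vs ω) - f (U ω, V ω) * g (U ω, V ω) * k (U ω, V ω) * h (Us ω, Vs ω) + f (U ω, V ω) * g (U ω, V ω) * (h (Us ω, Vs ω) * k (Us ω, Vs ω)) - f (U ω, V ω) * h (U ω, V ω) * k (U ω, V ω) * g (Us ω, Vs ω) + f (U ω, V ω) * h (U ω, V ω) * (g (Us ω, Vs ω) * k (Us ω, Vs ω))) μ := P5.add j6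
    have P7 : Integrable (fun ω => f (U ω, V ω) * g (U ω, V ω) * (h (U ω, V ω) * k (U ω, V ω)) - f (U ω, V ω) * g (U ω, V ω) * h (U ω, V ω) * k (Us ω, Vs ω) - f (U ω, V ω) * g (U ω, V ω) * k (U ω, V ω) * h (Us ω, Vs ω) + f (U ω, V ω) * g (U ω, V ω) * (h (Us ω, Vs ω) * k (Us ω, Vs ω)) - f (U ω, V ω) * h (U ω, V ω) * k (U ω, V ω) * g (Us ω, Vs ω) + f (U ω, V ω) * h (U ω, V ω) * (g (Us ω, Vs ω) * k (Us ω, Vs ω)) + f (U ω, V ω) * k (U ω, V ω) * (g (Us ω, Vs ω) * h (Us ω, Vs ω))) μ := P6.add j7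
    have P8 : Integrable (fun ω => f (U ω, V ω) * g (U ω, V ω) * (h (U ω, V ω) * k (U ω, V ω)) - f (U ω, V ω) * g (U ω, V ω) * h (U ω, V ω) * k (Us ω, Vs ω) - f (U ω, V ω) * g (U ω, V ω) * k (U ω, V ω) * h (Us ω, Vs ω) + f (U ω, V ω) * g (U ω, V ω) * (h (Us ω, Vs ω) * k (Us ω, Vs ω)) - f (U ω, V ω) * h (U ω, V ω) * k (U ω, V ω) * g (Us ω, Vs ω) + f (U ω, V ω) * h (U ω, V ω) * (g (Us ω, Vs ω) * k (Us ω, Vs ω)) + f (U ω, V ω) * k (U ω, V ω) * (g (Us ω, Vs ω) * h (Us ω, Vs ω)) - f (U ω, V ω) * (g (Us ω, Vs ω) * h (Us ω, Vs ω) * k (Us ω, Vs ω))) μ := P7.sub j8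
    have P9 : Integrable (fun ω => f (U ω, V ω) * g (U ω, V ω) * (h (U ω, V ω) * k (U ω, V ω)) - f (U ω, V ω) * g (U ω, V ω) * h (U ω, V ω) * k (Us ω, Vs ω) - f (U ω, V ω) * g (U ω, V ω) * k (U ω, V ω) * h (Us ω, Vs ω) + f (U ω, V ω) * g (U ω, V ω) * (h (Us ω, Vs ω) * k (Us ω, Vs ω)) - f (U ω, V ω) * h (U ω, V ω) * k (U ω, V ω) * g (Us ω, Vs ω) + f (U ω, V ω) * h (U ω, V ω) * (g (Us ω, Vs ω) * k (Us ω, Vs ω)) + f (U ω, V ω) * k (U ω, V ω) * (g (Us ω, Vs ω) * h (Us ω, Vs ω)) - f (U ω, V ω) * (g (Us ω, Vs ω) * h (Us ω, Vs ω) * k (Us ω, Vs ω)) - g (U ω, V ω) * h (U ω, V ω) * k (U ω, V ω) * f (Us ω, Vs ω)) μ := P8.sub j9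
    have P10 : Integrable (fun ω => f (U ω, V ω) * g (U ω, V ω) * (h (U ω, V ω) * k (U ω, V ω)) - f (U ω, V ω) * g (U ω, V ω) * h (U ω, V ω) * k (Us ω, Vs ω) - f (U ω, V ω) * g (U ω, V ω) * k (U ω, V ω) * h (Us ω, Vs ω) + f (U ω, V ω) * g (U ω, V ω) * (h (Us ω, Vs ω) * k (Us ω, Vs ω)) - f (U ω, V ω) * h (U ω, V ω) * k (U ω, V ω) * g (Us ω, Vs ω) + f (U ω, V ω) * h (U ω, V ω) * (g (Us ω, Vs ω) * k (Us ω, Vs ω)) + f (U ω, V ω) * k (U ω, V ω) * (g (Us ω, Vs ω) * h (Us ω, Vs ω)) - f (U ω, V ω) * (g (Us ω, Vs ω) * h (Us ω, Vs ω) * k (Us ω, Vs ω)) - g (U ω, V ω) * h (U ω, V ω) * k (U ω, V ω) * f (Us ω, Vs ω) + g (U ω, V ω) * h (U ω, V ω) * (f (Us ω, Vs ω) * k (Us ω, Vs ω))) μ := P9.add j10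
    have P11 : Integrable (fun ω => f (U ω, V ω) * g (U ω, V ω) * (h (U ω, V ω) * k (U ω, V ω)) - f (U ω, V ω) * g (U ω, V ω) * h (U ω, V ω) * k (Us ω, Vs ω) - f (U ω, V ω) * g (U ω, V ω) * k (U ω, V ω) * h (Us ω, Vs ω) + f (U ω, V ω) * g (U ω, V ω) * (h (Us ω, Vs ω) * k (Us ω, Vs ω)) - f (U ω, V ω) * h (U ω, V ω) * k (U ω, V ω) * g (Us ω, Vs ω) + f (U ω, V ω) * h (U ω, V ω) * (g (Us ω, Vs ω) * k (Us ω, Vs ω)) + f (U ω, V ω) * k (U ω, V ω) * (g (Us ω, Vs ω) * h (Us ω, Vs ω)) - f (U ω, V ω) * (g (Us ω, Vs ω) * h (Us ω, Vs ω) * k (Us ω, Vs ω)) - g (U ω, V ω) * h (U ω, V ω) * k (U ω, V ω) * f (Us ω, Vs ω) + g (U ω, V ω) * h (U ω, V ω) * (f (Us ω, Vs ω) * k (Us ω, Vs ω)) + g (U ω, V ω) * k (U ω, V ω) * (f (Us ω, Vs ω) * h (Us ω, Vs ω))) μ := P10.add j11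
    have P12 : Integrable (fun ω => f (U ω, V ω) * g (U ω, V ω) * (h (U ω, V ω) * k (U ω, V ω)) - f (U ω, V ω) * g (U ω, V ω) * h (U ω, V ω) * k (Us ω, Vs ω) - f (U ω, V ω) * g (U ω, V ω) * k (U ω, V ω) * h (Us ω, Vs ω) + f (U ω, V ω) * g (U ω, V ω) * (h (Us ω, Vs ω) * k (Us ω, Vs ω)) - f (U ω, V ω) * h (U ω, V ω) * k (U ω, V ω) * g (Us ω, Vs ω) + f (U ω, V ω) * h (U ω, V ω) * (g (Us ω, Vs ω) * k (Us ω, Vs ω)) + f (U ω, V ω) * k (U ω, V ω) * (g (Us ω, Vs ω) * h (Us ω, Vs ω)) - f (U ω, V ω) * (g (Us ω, Vs ω) * h (Us ω, Vs ω) * k (Us ω, Vs ω)) - g (U ω, V ω) * h (U ω, V ω) * k (U ω, V ω) * f (Us ω, Vs ω) + g (U ω, V ω) * h (U ω, V ω) * (f (Us ω, Vs ω) * k (Us ω, Vs ω)) + g (U ω, V ω) * k (U ω, V ω) * (f (Us ω, Vs ω) * h (Us ω, Vs ω)) + h (U ω, V ω) * k (U ω, V ω) * (f (Us ω, Vs ω)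 * g (Us ω, Vs ω))) μ := P11.add j12
    have P13 : Integrable (fun ω => f (U ω, V ω) * g (U ω, V ω) * (h (U ω, V ω) * k (U ω, V ω)) - f (U ω, V ω) * g (U ω, V ω) * h (U ω, V ω) * k (Us ω, Vs ω) - f (U ω, V ω) * g (U ω, V ω) * k (U ω, V ω) * h (Us ω, Vs ω) + f (U ω, V ω) * g (U ω, V ω) * (h (Us ω, Vs ω) * k (Us ω, Vs ω)) - f (U ω, V ω) * h (U ω, V ω) * k (U ω, V ω) * g (Us ω, Vs ω) + f (U ω, V ω) * h (U ω, V ω) * (g (Us ω, Vs ω) * k (Us ω, Vs ω)) + f (U ω, V ω) * k (U ω, V ω) * (g (Us ω, Vs ω) * h (Us ω, Vs ω)) - f (U ω, V ω) * (g (Us ω, Vs ω) * h (Us ω, Vs ω) * k (Us ω, Vs ω)) - g (U ω, V ω) * h (U ω, V ω) * k (U ω, V ω) * f (Us ω, Vs ω) + g (U ω, V ω) * h (U ω, V ω) * (f (Us ω, Vs ω) * k (Us ω, Vs ω)) + g (U ω, V ω) * k (U ω, V ω) * (f (Us ω, Vs ω) * h (Us ω, Vs ω)) + h (U ω, V ω)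 * k (U ω, V ω) * (f (Us ω, Vs ω) * g (Us ω, Vs ω)) - k (U ω, V ω) * (f (Us ω, Vs ω) * g (Us ω, Vs ω) * h (Us ω, Vs ω))) μ := P12.sub j13
    have P14 : Integrable (fun ω => f (U ω, V ω) * g (U ω, V ω) * (h (U ω, V ω) * k (U ω, V ω)) - f (U ω, V ω) * g (U ω, V ω) * h (U ω, V ω) * k (Us ω, Vs ω) - f (U ω, V ω) * g (U ω, V ω) * k (U ω, V ω) * h (Us ω, Vs ω) + f (U ω, V ω) * g (U ω, V ω) * (h (Us ω, Vs ω) * k (Us ω, Vs ω)) - f (U ω, V ω) * h (U ω, V ω) * k (U ω, V ω) * g (Us ω, Vs ω) + f (U ω, V ω) * h (U ω, V ω) * (g (Us ω, Vs ω) * k (Us ω, Vs ω)) + f (U ω, V ω) * k (U ω, V ω) * (g (Us ω, Vs ω) * h (Us ω, Vs ω)) - f (U ω, V ω) * (g (Us ω, Vs ω) * h (Us ω, Vs ω) * k (Us ω, Vs ω)) - g (U ω, V ω) * h (U ω, V ω) * k (U ω, V ω) * f (Us ω, Vs ω) + g (U ω, V ω) * h (U ω, V ω) * (f (Us ω, Vs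 ω) * k (Us ω, Vs ω)) + g (U ω, V ω) * k (U ω, V ω) * (f (Us ω, Vs ω) * h (Us ω, Vs ω)) + h (U ω, V ω) * k (U ω, V ω) * (f (Us ω, Vs ω) * g (Us ω, Vs ω)) - k (U ω, V ω) * (f (Us ω, Vs ω) * g (Us ω, Vs ω) * h (Us ω, Vs ω)) - h (U ω, V ω) * (f (Us ω, Vs ω) * g (Us ω, Vs ω) * k (Us ω, Vs ω))) μ := P13.sub j14
    have P15 : Integrable (fun ω => f (U ω, V ω) * g (U ω, V ω) * (h (U ω, V ω) * k (U ω, V ω)) - f (U ω, V ω) * g (U ω, V ω) * h (U ω, V ω) * k (Us ω, Vs ω) - f (U ω, V ω) * g (U ω, V ω) * k (U ω, V ω) * h (Us ω, Vs ω) + f (U ω, V ω) * g (U ω, V ω) * (h (Us ω, Vs ω) * k (Us ω, Vs ω)) - f (U ω, V ω) * h (U ω, V ω) * k (U ω, V ω) * g (Us ω, Vs ω) + f (U ω, V ω) * h (U ω, V ω) * (g (Us ω, Vs ω) * k (Us ω, Vs ω)) + f (U ω, V ω) * k (U ω, V ω) * (g (Us ω, Vs ω) * h (Us ω, Vs ω))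 - f (U ω, V ω) * (g (Us ω, Vs ω) * h (Us ω, Vs ω) * k (Us ω, Vs ω)) - g (U ω, V ω) * h (U ω, V ω) * k (U ω, V ω) * f (Us ω, Vs ω) + g (U ω, V ω) * h (U ω, V ω) * (f (Us ω, Vs ω) * k (Us ω, Vs ω)) + g (U ω, V ω) * k (U ω, V ω) * (f (Us ω, Vs ω) * h (Us ω, Vs ω)) + h (U ω, V ω) * k (U ω, V ω) * (f (Us ω, Vs ω) * g (Us ω, Vs ω)) - k (U ω, V ω) * (f (Us ω, Vs ω) * g (Us ω, Vs ω) * h (Us ω, Vs ω)) - h (U ω, V ω) * (f (Us ω, Vs ω) * g (Us ω, Vs ω) * k (Us ω, Vs ω)) - g (U ω, V ω) * (f (Us ω, Vs ω) * h (Us ω, Vs ω) * k (Us ω, Vs ω))) μ := P14.sub j15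
    rw [hexp, integral_add P15 j16,
      integral_sub P14 j15,
      integral_sub P13 j14,
      integral_sub P12 j13,
      integral_add P11 j12,
      integral_add P10 j11,
      integral_add P9 j10,
      integral_sub P8 j9,
      integral_sub P7 j8,
      integral_add P6 j7,
      integral_add P5 j6,
      integral_sub P4 j5,
      integral_add P3 j4,
      integral_sub P2 j3,
      integral_sub j1 j2]
    beta_reduce
    rw [v2, v3, v4, v5, v6, v7, v8, v9, v10, v11, v12, v13, v14, v15, v16]
    ring
  -- apply the quartic computation to coordinates
  have hP1 : ∀ i j : Fin d,
      ∫ ω, (U ω i - Us ω i) * (U ω i - Us ω i) * ((V ω j - Vs ω j) * (V ω j - Vs ω j)) ∂μ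
        = 2 * (∫ ω, U ω i * U ω i * (V ω j * V ω j) ∂μ)
          + 2 * ((∫ ω, U ω i * U ω i ∂μ) * (∫ ω, V ω j * V ω j ∂μ)
            + (∫ ω, U ω i * V ω j ∂μ) * (∫ ω, U ω i * V ω j ∂μ)
            + (∫ ω, U ω i * V ω j ∂μ) * (∫ ω, U ω i * V ω j ∂μ)) := fun i j =>
    quart (fun p => p.1 i) (fun p => p.1 i) (fun p => p.2 j) (fun p => p.2 j)
      (mpX i) (mpX i) (mpY j) (mpY j)
      (fun p => bX p i) (fun p => bX p i) (fun p => bY p j) (fun p => bY p j)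
      (hUc i) (hUc i) (hVc j) (hVc j)
  have hP2 : ∀ i j : Fin d,
      ∫ ω, (U ω i - Us ω i) * (V ω i - Vs ω i) * ((U ω j - Us ω j) * (V ω j - Vs ω j)) ∂μ
        = 2 * (∫ ω, U ω i * V ω i * (U ω j * V ω j) ∂μ)
          + 2 * ((∫ ω, U ω i * V ω i ∂μ) * (∫ ω, U ω j * V ω j ∂μ)
            + (∫ ω, U ω i * U ω j ∂μ) * (∫ ω, V ω i * V ω j ∂μ)
            + (∫ ω, U ω i * V ω j ∂μ) * (∫ ω, V ω i * U ω j ∂μ)) := fun i j =>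
    quart (fun p => p.1 i) (fun p => p.2 i) (fun p => p.1 j) (fun p => p.2 j)
      (mpX i) (mpY i) (mpX j) (mpY j)
      (fun p => bX p i) (fun p => bY p i) (fun p => bX p j) (fun p => bY p j)
      (hUc i) (hVc i) (hUc j) (hVc j)
  -- integrability of the two quartic difference terms
  have hUs4 : Integrable (fun ω => ‖Us ω‖^4) μ :=
    copyIntg (fun p => ‖p.1‖^4) ((measurable_fst.norm).pow_const 4) hU4
  have hVs4 : Integrable (fun ω => ‖Vs ω‖^4) μ :=
    copyIntg (fun p => ‖p.2‖^4) ((measurable_snd.norm).pow_const 4) hV4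
  have hB2int : Integrable (fun ω =>
      8*(27*(1 + ‖U ω‖^4 + ‖V ω‖^4) + 27*(1 + ‖Us ω‖^4 + ‖Vs ω‖^4))) μ :=
    ((((((integrable_const (1:ℝ)).add hU4).add hV4).const_mul 27).add
      ((((integrable_const (1:ℝ)).add hUs4).add hVs4).const_mul 27)).const_mul 8)
  have masterAll : ∀ (r : Ω → ℝ), Measurable r →
      (∀ ω, |r ω| ≤ (‖U ω‖ + ‖V ω‖ + 1 + (‖Us ω‖ + ‖Vs ω‖ + 1))^4) → Integrable r μ := by
    intro r hrm hrb
    refine hB2int.mono' hrm.aestronglyMeasurable ?_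
    filter_upwards with ω
    rw [Real.norm_eq_abs]
    have h2 := add_pow4_le (a := ‖U ω‖ + ‖V ω‖ + 1) (b := ‖Us ω‖ + ‖Vs ω‖ + 1)
      (by positivity) (by positivity)
    have h3 := aux_pow4_bound ‖U ω‖ ‖V ω‖ (norm_nonneg _) (norm_nonneg _)
    have h4 := aux_pow4_bound ‖Us ω‖ ‖Vs ω‖ (norm_nonneg _) (norm_nonneg _)
    have h1 := hrb ω
    linarith
  have cb : ∀ (W : Ω → EuclideanSpace ℝ (Fin d)) (hW : W = U ∨ W = V ∨ W = Us ∨ W = Vs)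
      (ω : Ω) (i : Fin d), True := fun _ _ _ _ => trivial
  have bUU : ∀ (ω : Ω) (i : Fin d),
      |U ω i - Us ω i| ≤ ‖U ω‖ + ‖V ω‖ + 1 + (‖Us ω‖ + ‖Vs ω‖ + 1) := by
    intro ω i
    have h1 := (habs_sub (U ω i) (Us ω i)).trans
      (add_le_add (coord_le_norm (U ω) i) (coord_le_norm (Us ω) i))
    have := norm_nonneg (V ω); have := norm_nonneg (Vs ω); linarith
  have bVV : ∀ (ω : Ω) (i : Fin d),
      |V ω i - Vs ω i| ≤ ‖U ω‖ + ‖V ω‖ + 1 + (‖Us ω‖ + ‖Vs ω‖ + 1) := by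
    intro ω i
    have h1 := (habs_sub (V ω i) (Vs ω i)).trans
      (add_le_add (coord_le_norm (V ω) i) (coord_le_norm (Vs ω) i))
    have := norm_nonneg (U ω); have := norm_nonneg (Us ω); linarith
  have jq1 : ∀ i j : Fin d, Integrable
      (fun ω => (U ω i - Us ω i) * (U ω i - Us ω i) * ((V ω j - Vs ω j) * (V ω j - Vs ω j))) μ := by
    intro i j
    refine masterAll _ ?_ ?_
    · exact (((mU i).sub (mUs i)).mul ((mU i).sub (mUs i))).mul
        (((mV j).sub (mVs j)).mul ((mV j).sub (mVs j)))
    · intro ω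
      exact bnd4 (bUU ω i) (bUU ω i) (bVV ω j) (bVV ω j)
  have jq2 : ∀ i j : Fin d, Integrable
      (fun ω => (U ω i - Us ω i) * (V ω i - Vs ω i) * ((U ω j - Us ω j) * (V ω j - Vs ω j))) μ := by
    intro i j
    refine masterAll _ ?_ ?_
    · exact (((mU i).sub (mUs i)).mul ((mV i).sub (mVs i))).mul
        (((mU j).sub (mUs j)).mul ((mV j).sub (mVs j)))
    · intro ω
      exact bnd4 (bUU ω i) (bVV ω i) (bUU ω j) (bVV ω j)
  -- pointwise expansion of the left-hand integrand
  have hsubapp : ∀ (x y : EuclideanSpace ℝ (Fin d)) (i : Fin d), (x - y) i = x i - y i :=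
    fun _ _ _ => rfl
  have hpoint : ∀ ω : Ω, ‖U ω - Us ω‖ ^ 2 * ‖V ω - Vs ω‖ ^ 2 - ⟪U ω - Us ω, V ω - Vs ω⟫ ^ 2
      = ∑ i, ∑ j, ((U ω i - Us ω i) * (U ω i - Us ω i) * ((V ω j - Vs ω j) * (V ω j - Vs ω j))
          - (U ω i - Us ω i) * (V ω i - Vs ω i) * ((U ω j - Us ω j) * (V ω j - Vs ω j))) := by
    intro ω
    rw [norm_sq_eq (U ω - Us ω), norm_sq_eq (V ω - Vs ω), inner_eq, pow_two]
    simp only [Finset.sum_mul_sum]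
    rw [← Finset.sum_sub_distrib]
    refine Finset.sum_congr rfl fun i _ => ?_
    rw [← Finset.sum_sub_distrib]
    refine Finset.sum_congr rfl fun j _ => ?_
    simp only [hsubapp]
  -- the left-hand side as a double sum
  have hLHS : ∫ ω, (‖U ω - Us ω‖ ^ 2 * ‖V ω - Vs ω‖ ^ 2 - ⟪U ω - Us ω, V ω - Vs ω⟫ ^ 2) ∂μ
      = ∑ i, ∑ j,
          ((2 * (∫ ω, U ω i * U ω i * (V ω j * V ω j) ∂μ)
            + 2 * ((∫ ω, U ω i * U ω i ∂μ) * (∫ ω, V ω j * V ω j ∂μ)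
              + (∫ ω, U ω i * V ω j ∂μ) * (∫ ω, U ω i * V ω j ∂μ)
              + (∫ ω, U ω i * V ω j ∂μ) * (∫ ω, U ω i * V ω j ∂μ)))
          - (2 * (∫ ω, U ω i * V ω i * (U ω j * V ω j) ∂μ)
            + 2 * ((∫ ω, U ω i * V ω i ∂μ) * (∫ ω, U ω j * V ω j ∂μ)
              + (∫ ω, U ω i * U ω j ∂μ) * (∫ ω, V ω i * V ω j ∂μ)
              + (∫ ω, U ω i * V ω j ∂μ) * (∫ ω, V ω i * U ω j ∂μ)))) := by
    calc ∫ ω, (‖U ω - Us ω‖ ^ 2 * ‖V ω - Vs ω‖ ^ 2 - ⟪U ω - Us ω, V ω - Vs ω⟫ ^ 2) ∂μ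
        = ∫ ω, ∑ i, ∑ j,
            ((U ω i - Us ω i) * (U ω i - Us ω i) * ((V ω j - Vs ω j) * (V ω j - Vs ω j))
            - (U ω i - Us ω i) * (V ω i - Vs ω i) * ((U ω j - Us ω j) * (V ω j - Vs ω j))) ∂μ :=
          integral_congr_ae (Filter.Eventually.of_forall hpoint)
      _ = ∑ i, ∫ ω, ∑ j,
            ((U ω i - Us ω i) * (U ω i - Us ω i) * ((V ω j - Vs ω j) * (V ω j - Vs ω j))
            - (U ω i - Us ω i) * (V ω i - Vs ω i) * ((U ω j - Us ω j) * (V ω j - Vs ω j))) ∂μ :=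
          integral_finset_sum _ (fun i _ =>
            integrable_finset_sum _ (fun j _ => (jq1 i j).sub (jq2 i j)))
      _ = ∑ i, ∑ j, ∫ ω,
            ((U ω i - Us ω i) * (U ω i - Us ω i) * ((V ω j - Vs ω j) * (V ω j - Vs ω j))
            - (U ω i - Us ω i) * (V ω i - Vs ω i) * ((U ω j - Us ω j) * (V ω j - Vs ω j))) ∂μ :=
          Finset.sum_congr rfl fun i _ =>
            integral_finset_sum _ (fun j _ => (jq1 i j).sub (jq2 i j))
      _ = _ := Finset.sum_congr rfl fun i _ => Finset.sum_congr rfl fun j _ => by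
          rw [integral_sub (jq1 i j) (jq2 i j), hP1 i j, hP2 i j]
  -- the first right-hand integral as a double sum
  have jr1 : ∀ i j : Fin d, Integrable (fun ω => U ω i * U ω i * (V ω j * V ω j)) μ :=
    fun i j => master (fun p => p.1 i * p.1 i * (p.2 j * p.2 j))
      (((mpX i).mul (mpX i)).mul ((mpY j).mul (mpY j)))
      (fun p => bnd4 (bX p i) (bX p i) (bY p j) (bY p j))
  have jr2 : ∀ i j : Fin d, Integrable (fun ω => U ω i * V ω i * (U ω j * V ω j)) μ :=
    fun i j => master (fun p => p.1 i * p.2 i * (p.1 j * p.2 j))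
      (((mpX i).mul (mpY i)).mul ((mpX j).mul (mpY j)))
      (fun p => bnd4 (bX p i) (bY p i) (bX p j) (bY p j))
  have hpoint2 : ∀ ω : Ω, ‖U ω‖ ^ 2 * ‖V ω‖ ^ 2 - ⟪U ω, V ω⟫ ^ 2
      = ∑ i, ∑ j, (U ω i * U ω i * (V ω j * V ω j) - U ω i * V ω i * (U ω j * V ω j)) := by
    intro ω
    rw [norm_sq_eq (U ω), norm_sq_eq (V ω), inner_eq, pow_two]
    simp only [Finset.sum_mul_sum]
    rw [← Finset.sum_sub_distrib]
    refine Finset.sum_congr rfl fun i _ => ?_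
    rw [← Finset.sum_sub_distrib]
  have hRfirst : ∫ ω, (‖U ω‖ ^ 2 * ‖V ω‖ ^ 2 - ⟪U ω, V ω⟫ ^ 2) ∂μ
      = ∑ i, ∑ j, ((∫ ω, U ω i * U ω i * (V ω j * V ω j) ∂μ)
          - ∫ ω, U ω i * V ω i * (U ω j * V ω j) ∂μ) := by
    calc ∫ ω, (‖U ω‖ ^ 2 * ‖V ω‖ ^ 2 - ⟪U ω, V ω⟫ ^ 2) ∂μ
        = ∫ ω, ∑ i, ∑ j,
            (U ω i * U ω i * (V ω j * V ω j) - U ω i * V ω i * (U ω j * V ω j)) ∂μ :=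
          integral_congr_ae (Filter.Eventually.of_forall hpoint2)
      _ = ∑ i, ∫ ω, ∑ j,
            (U ω i * U ω i * (V ω j * V ω j) - U ω i * V ω i * (U ω j * V ω j)) ∂μ :=
          integral_finset_sum _ (fun i _ =>
            integrable_finset_sum _ (fun j _ => (jr1 i j).sub (jr2 i j)))
      _ = ∑ i, ∑ j, ∫ ω,
            (U ω i * U ω i * (V ω j * V ω j) - U ω i * V ω i * (U ω j * V ω j)) ∂μ :=
          Finset.sum_congr rfl fun i _ =>
            integral_finset_sum _ (fun j _ => (jr1 i j).sub (jr2 i j))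
      _ = _ := Finset.sum_congr rfl fun i _ => Finset.sum_congr rfl fun j _ =>
          integral_sub (jr1 i j) (jr2 i j)
  -- trace identities
  have htrUU : (covMatrix μ U U).trace = ∑ i, ∫ ω, U ω i * U ω i ∂μ := by
    simp [Matrix.trace, Matrix.diag, covMatrix]
  have htrVV : (covMatrix μ V V).trace = ∑ i, ∫ ω, V ω i * V ω i ∂μ := by
    simp [Matrix.trace, Matrix.diag, covMatrix]
  have htrUV : (covMatrix μ U V).trace = ∑ i, ∫ ω, U ω i * V ω i ∂μ := by
    simp [Matrix.trace, Matrix.diag, covMatrix]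
  have htrAB : (covMatrix μ U U * covMatrix μ V V).trace
      = ∑ i, ∑ j, (∫ ω, U ω i * U ω j ∂μ) * (∫ ω, V ω j * V ω i ∂μ) := by
    simp [Matrix.trace, Matrix.diag, Matrix.mul_apply, covMatrix]
  have htrKK : (covMatrix μ U V * covMatrix μ V U).trace
      = ∑ i, ∑ j, (∫ ω, U ω i * V ω j ∂μ) * (∫ ω, V ω j * U ω i ∂μ) := by
    simp [Matrix.trace, Matrix.diag, Matrix.mul_apply, covMatrix]
  have htr2 : ((covMatrix μ U V - covMatrix μ V U) * (covMatrix μ V U - covMatrix μ U V)).trace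
      = ∑ i, ∑ j, ((∫ ω, U ω i * V ω j ∂μ) - (∫ ω, V ω i * U ω j ∂μ))
          * ((∫ ω, V ω j * U ω i ∂μ) - (∫ ω, U ω j * V ω i ∂μ)) := by
    simp [Matrix.trace, Matrix.diag, Matrix.mul_apply, Matrix.sub_apply, covMatrix]
  -- orientation lemmas
  have hVUe : ∀ i j : Fin d, (∫ ω, V ω i * U ω j ∂μ) = ∫ ω, U ω j * V ω i ∂μ := fun i j =>
    congrArg (integral μ) (funext fun ω => mul_comm (V ω i) (U ω j))
  have hVsym : ∀ i j : Fin d, (∫ ω, V ω j * V ω i ∂μ) = ∫ ω, V ω i * V ω j ∂μ := fun i j =>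
    congrArg (integral μ) (funext fun ω => mul_comm (V ω j) (V ω i))
  have e3 : (∑ i, ∑ j, (∫ ω, U ω i * U ω j ∂μ) * (∫ ω, V ω j * V ω i ∂μ))
      = ∑ i, ∑ j, (∫ ω, U ω i * U ω j ∂μ) * (∫ ω, V ω i * V ω j ∂μ) :=
    Finset.sum_congr rfl fun i _ => Finset.sum_congr rfl fun j _ => by rw [hVsym i j]
  -- the main identity
  have main : ∫ ω, (‖U ω - Us ω‖ ^ 2 * ‖V ω - Vs ω‖ ^ 2 - ⟪U ω - Us ω, V ω - Vs ω⟫ ^ 2) ∂μ =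
      2 * (∫ ω, (‖U ω‖ ^ 2 * ‖V ω‖ ^ 2 - ⟪U ω, V ω⟫ ^ 2) ∂μ)
      + ((covMatrix μ U V - covMatrix μ V U) * (covMatrix μ V U - covMatrix μ U V)).trace
      + 2 * ((covMatrix μ U U).trace * (covMatrix μ V V).trace
          - (covMatrix μ U V).trace ^ 2
          - (covMatrix μ U U * covMatrix μ V V).trace
          + (covMatrix μ U V * covMatrix μ V U).trace) := by
    rw [hLHS, hRfirst, htr2, htrUU, htrVV, htrUV, htrAB, htrKK, e3]
    simp only [hVUe]
    exact final_algebra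
      (fun i j => ∫ ω, U ω i * U ω i * (V ω j * V ω j) ∂μ)
      (fun i j => ∫ ω, U ω i * V ω i * (U ω j * V ω j) ∂μ)
      (fun i j => ∫ ω, U ω i * U ω j ∂μ)
      (fun i j => ∫ ω, V ω i * V ω j ∂μ)
      (fun i j => ∫ ω, U ω i * V ω j ∂μ)
  -- integrability of coordinate pair products
  have iUU : ∀ i j : Fin d, Integrable (fun ω => U ω i * U ω j) μ := fun i j =>
    master (fun p => p.1 i * p.1 j) ((mpX i).mul (mpX j))
      (fun p => bnd2 (hNp p) (bX p i) (bX p j))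
  have iVV : ∀ i j : Fin d, Integrable (fun ω => V ω i * V ω j) μ := fun i j =>
    master (fun p => p.2 i * p.2 j) ((mpY i).mul (mpY j))
      (fun p => bnd2 (hNp p) (bY p i) (bY p j))
  have iUV : ∀ i j : Fin d, Integrable (fun ω => U ω i * V ω j) μ := fun i j =>
    master (fun p => p.1 i * p.2 j) ((mpX i).mul (mpY j))
      (fun p => bnd2 (hNp p) (bX p i) (bY p j))
  -- the Fubini computation for the third summand
  have hqval : ∀ i j : Fin d,
      ∫ z : Ω × Ω, (U z.1 i * V z.2 j + U z.2 i * V z.1 j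
          - U z.1 j * V z.2 i - U z.2 j * V z.1 i)^2 ∂(μ.prod μ)
      = 2*((∫ ω, U ω i * U ω i ∂μ) * (∫ ω, V ω j * V ω j ∂μ))
        + 2*((∫ ω, U ω j * U ω j ∂μ) * (∫ ω, V ω i * V ω i ∂μ))
        - 4*((∫ ω, U ω i * U ω j ∂μ) * (∫ ω, V ω i * V ω j ∂μ))
        + 2*((∫ ω, U ω i * V ω j ∂μ) * (∫ ω, U ω i * V ω j ∂μ))
        + 2*((∫ ω, U ω j * V ω i ∂μ) * (∫ ω, U ω j * V ω i ∂μ))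
        - 4*((∫ ω, U ω i * V ω i ∂μ) * (∫ ω, U ω j * V ω j ∂μ)) := by
    intro i j
    have q1 : Integrable (fun z : Ω × Ω => (U z.1 i * U z.1 i) * (V z.2 j * V z.2 j)) (μ.prod μ) :=
      (iUU i i).mul_prod (iVV j j)
    have q2 : Integrable (fun z : Ω × Ω => (V z.1 j * V z.1 j) * (U z.2 i * U z.2 i)) (μ.prod μ) :=
      (iVV j j).mul_prod (iUU i i)
    have q3 : Integrable (fun z : Ω × Ω => (U z.1 j * U z.1 j) * (V z.2 i * V z.2 i)) (μ.prod μ) :=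
      (iUU j j).mul_prod (iVV i i)
    have q4 : Integrable (fun z : Ω × Ω => (V z.1 i * V z.1 i) * (U z.2 j * U z.2 j)) (μ.prod μ) :=
      (iVV i i).mul_prod (iUU j j)
    have q5 : Integrable (fun z : Ω × Ω => 2*((U z.1 i * V z.1 j) * (U z.2 i * V z.2 j))) (μ.prod μ) :=
      ((iUV i j).mul_prod (iUV i j)).const_mul 2
    have q6 : Integrable (fun z : Ω × Ω => 2*((U z.1 j * V z.1 i) * (U z.2 j * V z.2 i))) (μ.prod μ) :=
      ((iUV j i).mul_prod (iUV j i)).const_mul 2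
    have q7 : Integrable (fun z : Ω × Ω => 2*((U z.1 i * U z.1 j) * (V z.2 i * V z.2 j))) (μ.prod μ) :=
      ((iUU i j).mul_prod (iVV i j)).const_mul 2
    have q8 : Integrable (fun z : Ω × Ω => 2*((V z.1 i * V z.1 j) * (U z.2 i * U z.2 j))) (μ.prod μ) :=
      ((iVV i j).mul_prod (iUU i j)).const_mul 2
    have q9 : Integrable (fun z : Ω × Ω => 2*((U z.1 i * V z.1 i) * (U z.2 j * V z.2 j))) (μ.prod μ) :=
      ((iUV i i).mul_prod (iUV j j)).const_mul 2
    have q10 : Integrable (fun z : Ω × Ω => 2*((U z.1 j * V z.1 j) * (U z.2 i * V z.2 i))) (μ.prod μ) :=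
      ((iUV j j).mul_prod (iUV i i)).const_mul 2
    have w1 : ∫ z : Ω × Ω, (U z.1 i * U z.1 i) * (V z.2 j * V z.2 j) ∂(μ.prod μ)
        = (∫ ω, U ω i * U ω i ∂μ) * ∫ ω, V ω j * V ω j ∂μ :=
      integral_prod_mul (fun ω => U ω i * U ω i) (fun ω => V ω j * V ω j)
    have w2 : ∫ z : Ω × Ω, (V z.1 j * V z.1 j) * (U z.2 i * U z.2 i) ∂(μ.prod μ)
        = (∫ ω, V ω j * V ω j ∂μ) * ∫ ω, U ω i * U ω i ∂μ :=
      integral_prod_mul (fun ω => V ω j * V ω j) (fun ω => U ω i * U ω i)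
    have w3 : ∫ z : Ω × Ω, (U z.1 j * U z.1 j) * (V z.2 i * V z.2 i) ∂(μ.prod μ)
        = (∫ ω, U ω j * U ω j ∂μ) * ∫ ω, V ω i * V ω i ∂μ :=
      integral_prod_mul (fun ω => U ω j * U ω j) (fun ω => V ω i * V ω i)
    have w4 : ∫ z : Ω × Ω, (V z.1 i * V z.1 i) * (U z.2 j * U z.2 j) ∂(μ.prod μ)
        = (∫ ω, V ω i * V ω i ∂μ) * ∫ ω, U ω j * U ω j ∂μ :=
      integral_prod_mul (fun ω => V ω i * V ω i) (fun ω => U ω j * U ω j)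
    have w5 : ∫ z : Ω × Ω, 2*((U z.1 i * V z.1 j) * (U z.2 i * V z.2 j)) ∂(μ.prod μ)
        = 2*((∫ ω, U ω i * V ω j ∂μ) * ∫ ω, U ω i * V ω j ∂μ) := by
      rw [integral_const_mul]
      exact congrArg (fun r => 2*r)
        (integral_prod_mul (fun ω => U ω i * V ω j) (fun ω => U ω i * V ω j))
    have w6 : ∫ z : Ω × Ω, 2*((U z.1 j * V z.1 i) * (U z.2 j * V z.2 i)) ∂(μ.prod μ)
        = 2*((∫ ω, U ω j * V ω i ∂μ) * ∫ ω, U ω j * V ω i ∂μ) := by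
      rw [integral_const_mul]
      exact congrArg (fun r => 2*r)
        (integral_prod_mul (fun ω => U ω j * V ω i) (fun ω => U ω j * V ω i))
    have w7 : ∫ z : Ω × Ω, 2*((U z.1 i * U z.1 j) * (V z.2 i * V z.2 j)) ∂(μ.prod μ)
        = 2*((∫ ω, U ω i * U ω j ∂μ) * ∫ ω, V ω i * V ω j ∂μ) := by
      rw [integral_const_mul]
      exact congrArg (fun r => 2*r)
        (integral_prod_mul (fun ω => U ω i * U ω j) (fun ω => V ω i * V ω j))
    have w8 : ∫ z : Ω × Ω, 2*((V z.1 i * V z.1 j) * (U z.2 i * U z.2 j)) ∂(μ.prod μ)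
        = 2*((∫ ω, V ω i * V ω j ∂μ) * ∫ ω, U ω i * U ω j ∂μ) := by
      rw [integral_const_mul]
      exact congrArg (fun r => 2*r)
        (integral_prod_mul (fun ω => V ω i * V ω j) (fun ω => U ω i * U ω j))
    have w9 : ∫ z : Ω × Ω, 2*((U z.1 i * V z.1 i) * (U z.2 j * V z.2 j)) ∂(μ.prod μ)
        = 2*((∫ ω, U ω i * V ω i ∂μ) * ∫ ω, U ω j * V ω j ∂μ) := by
      rw [integral_const_mul]
      exact congrArg (fun r => 2*r)
        (integral_prod_mul (fun ω => U ω i * V ω i) (fun ω => U ω j * V ω j))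
    have w10 : ∫ z : Ω × Ω, 2*((U z.1 j * V z.1 j) * (U z.2 i * V z.2 i)) ∂(μ.prod μ)
        = 2*((∫ ω, U ω j * V ω j ∂μ) * ∫ ω, U ω i * V ω i ∂μ) := by
      rw [integral_const_mul]
      exact congrArg (fun r => 2*r)
        (integral_prod_mul (fun ω => U ω j * V ω j) (fun ω => U ω i * V ω i))
    have hexp3 : (fun z : Ω × Ω => (U z.1 i * V z.2 j + U z.2 i * V z.1 j
          - U z.1 j * V z.2 i - U z.2 j * V z.1 i)^2)
        = fun z : Ω × Ω =>
          (U z.1 i * U z.1 i) * (V z.2 j * V z.2 j)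
          + (V z.1 j * V z.1 j) * (U z.2 i * U z.2 i)
          + (U z.1 j * U z.1 j) * (V z.2 i * V z.2 i)
          + (V z.1 i * V z.1 i) * (U z.2 j * U z.2 j)
          + 2*((U z.1 i * V z.1 j) * (U z.2 i * V z.2 j))
          + 2*((U z.1 j * V z.1 i) * (U z.2 j * V z.2 i))
          - 2*((U z.1 i * U z.1 j) * (V z.2 i * V z.2 j))
          - 2*((V z.1 i * V z.1 j) * (U z.2 i * U z.2 j))
          - 2*((U z.1 i * V z.1 i) * (U z.2 j * V z.2 j))
          - 2*((U z.1 j * V z.1 j) * (U z.2 i * V z.2 i)) := funext fun z => by ring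
    have R2 : Integrable (fun z : Ω × Ω => (U z.1 i * U z.1 i) * (V z.2 j * V z.2 j) + (V z.1 j * V z.1 j) * (U z.2 i * U z.2 i)) (μ.prod μ) := q1.add q2
    have R3 : Integrable (fun z : Ω × Ω => (U z.1 i * U z.1 i) * (V z.2 j * V z.2 j) + (V z.1 j * V z.1 j) * (U z.2 i * U z.2 i) + (U z.1 j * U z.1 j) * (V z.2 i * V z.2 i)) (μ.prod μ) := R2.add q3
    have R4 : Integrable (fun z : Ω × Ω => (U z.1 i * U z.1 i) * (V z.2 j * V z.2 j) + (V z.1 j * V z.1 j) * (U z.2 i * U z.2 i) + (U z.1 j * U z.1 j) * (V z.2 i * V z.2 i) + (V z.1 i * V z.1 i) * (U z.2 j * U z.2 j)) (μ.prod μ) := R3.add q4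
    have R5 : Integrable (fun z : Ω × Ω => (U z.1 i * U z.1 i) * (V z.2 j * V z.2 j) + (V z.1 j * V z.1 j) * (U z.2 i * U z.2 i) + (U z.1 j * U z.1 j) * (V z.2 i * V z.2 i) + (V z.1 i * V z.1 i) * (U z.2 j * U z.2 j) + 2*((U z.1 i * V z.1 j) * (U z.2 i * V z.2 j))) (μ.prod μ) := R4.add q5
    have R6 : Integrable (fun z : Ω × Ω => (U z.1 i * U z.1 i) * (V z.2 j * V z.2 j) + (V z.1 j * V z.1 j) * (U z.2 i * U z.2 i) + (U z.1 j * U z.1 j) * (V z.2 i * V z.2 i) + (V z.1 i * V z.1 i) * (U z.2 j * U z.2 j) + 2*((U z.1 i * V z.1 j) * (U z.2 i * V z.2 j)) + 2*((U z.1 j * V z.1 i) * (U z.2 j * V z.2 i))) (μ.prod μ) := R5.add q6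
    have R7 : Integrable (fun z : Ω × Ω => (U z.1 i * U z.1 i) * (V z.2 j * V z.2 j) + (V z.1 j * V z.1 j) * (U z.2 i * U z.2 i) + (U z.1 j * U z.1 j) * (V z.2 i * V z.2 i) + (V z.1 i * V z.1 i) * (U z.2 j * U z.2 j) + 2*((U z.1 i * V z.1 j) * (U z.2 i * V z.2 j)) + 2*((U z.1 j * V z.1 i) * (U z.2 j * V z.2 i)) - 2*((U z.1 i * U z.1 j) * (V z.2 i * V z.2 j))) (μ.prod μ) := R6.sub q7
    have R8 : Integrable (fun z : Ω × Ω => (U z.1 i * U z.1 i) * (V z.2 j * V z.2 j) + (V z.1 j * V z.1 j) * (U z.2 i * U z.2 i) + (U z.1 j * U z.1 j) * (V z.2 i * V z.2 i) + (V z.1 i * V z.1 i) * (U z.2 j * U z.2 j) + 2*((U z.1 i * V z.1 j) * (U z.2 i * V z.2 j)) + 2*((U z.1 j * V z.1 i) * (U z.2 j * V z.2 i)) - 2*((U z.1 i * U z.1 j) * (V z.2 i * V z.2 j)) - 2*((V z.1 i * V z.1 j) * (U z.2 i * U z.2 j))) (μ.prod μ) := R7.sub q8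
    have R9 : Integrable (fun z : Ω × Ω => (U z.1 i * U z.1 i) * (V z.2 j * V z.2 j) + (V z.1 j * V z.1 j) * (U z.2 i * U z.2 i) + (U z.1 j * U z.1 j) * (V z.2 i * V z.2 i) + (V z.1 i * V z.1 i) * (U z.2 j * U z.2 j) + 2*((U z.1 i * V z.1 j) * (U z.2 i * V z.2 j)) + 2*((U z.1 j * V z.1 i) * (U z.2 j * V z.2 i)) - 2*((U z.1 i * U z.1 j) * (V z.2 i * V z.2 j)) - 2*((V z.1 i * V z.1 j) * (U z.2 i * U z.2 j)) - 2*((U z.1 i * V z.1 i) * (U z.2 j * V z.2 j))) (μ.prod μ) := R8.sub q9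
    rw [hexp3, integral_sub R9 q10,
      integral_sub R8 q9,
      integral_sub R7 q8,
      integral_sub R6 q7,
      integral_add R5 q6,
      integral_add R4 q5,
      integral_add R3 q4,
      integral_add R2 q3,
      integral_add q1 q2]
    beta_reduce
    rw [w1, w2, w3, w4, w5, w6, w7, w8, w9, w10]
    ring
  have hT4 : (∑ i, ∑ j,
        (2*((∫ ω, U ω i * U ω i ∂μ) * (∫ ω, V ω j * V ω j ∂μ))
        + 2*((∫ ω, U ω j * U ω j ∂μ) * (∫ ω, V ω i * V ω i ∂μ))
        - 4*((∫ ω, U ω i * U ω j ∂μ) * (∫ ω, V ω i * V ω j ∂μ))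
        + 2*((∫ ω, U ω i * V ω j ∂μ) * (∫ ω, U ω i * V ω j ∂μ))
        + 2*((∫ ω, U ω j * V ω i ∂μ) * (∫ ω, U ω j * V ω i ∂μ))
        - 4*((∫ ω, U ω i * V ω i ∂μ) * (∫ ω, U ω j * V ω j ∂μ))))
      = 4*((∑ i, ∑ j, (∫ ω, U ω i * U ω i ∂μ) * (∫ ω, V ω j * V ω j ∂μ))
          - (∑ i, ∑ j, (∫ ω, U ω i * V ω i ∂μ) * (∫ ω, U ω j * V ω j ∂μ))
          - (∑ i, ∑ j, (∫ ω, U ω i * U ω j ∂μ) * (∫ ω, V ω i * V ω j ∂μ))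
          + ∑ i, ∑ j, (∫ ω, U ω i * V ω j ∂μ) * (∫ ω, U ω i * V ω j ∂μ)) :=
    T_algebra (fun i j => ∫ ω, U ω i * U ω j ∂μ) (fun i j => ∫ ω, V ω i * V ω j ∂μ)
      (fun i j => ∫ ω, U ω i * V ω j ∂μ)
  have hTpos : 0 ≤ (∑ i, ∑ j, (∫ ω, U ω i * U ω i ∂μ) * (∫ ω, V ω j * V ω j ∂μ))
      - (∑ i, ∑ j, (∫ ω, U ω i * V ω i ∂μ) * (∫ ω, U ω j * V ω j ∂μ))
      - (∑ i, ∑ j, (∫ ω, U ω i * U ω j ∂μ) * (∫ ω, V ω i * V ω j ∂μ))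
      + ∑ i, ∑ j, (∫ ω, U ω i * V ω j ∂μ) * (∫ ω, U ω i * V ω j ∂μ) := by
    have h1 : (0:ℝ) ≤ ∑ i : Fin d, ∑ j : Fin d,
        ∫ z : Ω × Ω, (U z.1 i * V z.2 j + U z.2 i * V z.1 j
          - U z.1 j * V z.2 i - U z.2 j * V z.1 i)^2 ∂(μ.prod μ) :=
      Finset.sum_nonneg fun i _ => Finset.sum_nonneg fun j _ =>
        integral_nonneg fun z => sq_nonneg _
    rw [Finset.sum_congr rfl (fun i _ => Finset.sum_congr rfl (fun j _ => hqval i j))] at h1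
    rw [hT4] at h1
    linarith
  -- assemble the four statements
  refine ⟨main, ?_, ?_, ?_⟩
  · refine integral_nonneg fun ω => ?_
    simp only [Pi.zero_apply]
    have h := real_inner_mul_inner_self_le (U ω) (V ω)
    rw [real_inner_self_eq_norm_sq, real_inner_self_eq_norm_sq] at h
    nlinarith [h]
  · rw [htr2]
    simp only [hVUe]
    exact Finset.sum_nonneg fun i _ => Finset.sum_nonneg fun j _ => mul_self_nonneg _
  · rw [htrUU, htrVV, htrUV, htrAB, htrKK, e3]
    simp only [hVUe]
    rw [pow_two]
    simp only [Finset.sum_mul_sum]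
    linarith [hTpos]
end

section
/- Let d ≥ 1 and let n_u, m_u, n_v, m_v, l be unit vectors in ℝ^d satisfying the frame hypothesis: n_u ⟂ m_u, n_v ⟂ m_v, l is orthogonal to each of n_u, m_u, n_v, m_v, and n_u·n_v = m_u·m_v, n_u·m_v = −m_u·n_v. For θ, φ ∈ ℝ define n'_u := cosθ·n_u + sinθ cosφ·m_u + sinθ sinφ·l and n'_v := cosθ·n_v + sinθ cosφ·m_v + sinθ sinφ·l. Then n'_u and n'_v are unit vectors, and n'_u·n'_v − n_u·n_v = −sin²θ·sin²φ·(n_u·n_v − 1); equivalently, |n'_u − n'_v|² − |n_u − n_v|² = −sin²θ·sin²φ·|n_u − n_v|². In particular |n'_u − n'_v| ≤ |n_u − n_v|. -/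
set_option maxHeartbeats 800000
open Real
open scoped RealInnerProductSpace

/-- Spherical (parallel-transport) coupling of two isotropic steps:
given a coupled frame `(n_u, m_u, n_v, m_v, l)` of unit vectors in `ℝ^d` and angles
`θ, φ`, the coupled post-collisional directions are unit vectors and satisfy
`n'_u·n'_v − n_u·n_v = −sin²θ sin²φ (n_u·n_v − 1)`, equivalently
`|n'_u − n'_v|² − |n_u − n_v|² = −sin²θ sin²φ |n_u − n_v|²`; in particular the
coupling is contractive. -/
theorem stmt9 {d : ℕ} (hd : 1 ≤ d)
    (nu mu nv mv l : EuclideanSpace ℝ (Fin d))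
    (hnu : ‖nu‖ = 1) (hmu : ‖mu‖ = 1) (hnv : ‖nv‖ = 1) (hmv : ‖mv‖ = 1) (hl : ‖l‖ = 1)
    (hnumu : ⟪nu, mu⟫ = 0) (hnvmv : ⟪nv, mv⟫ = 0)
    (hlnu : ⟪l, nu⟫ = 0) (hlmu : ⟪l, mu⟫ = 0) (hlnv : ⟪l, nv⟫ = 0) (hlmv : ⟪l, mv⟫ = 0)
    (hframe1 : ⟪nu, nv⟫ = ⟪mu, mv⟫) (hframe2 : ⟪nu, mv⟫ = -⟪mu, nv⟫)
    (θ φ : ℝ)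
    (nu' nv' : EuclideanSpace ℝ (Fin d))
    (hnu' : nu' = cos θ • nu + (sin θ * cos φ) • mu + (sin θ * sin φ) • l)
    (hnv' : nv' = cos θ • nv + (sin θ * cos φ) • mv + (sin θ * sin φ) • l) :
    ‖nu'‖ = 1 ∧ ‖nv'‖ = 1 ∧
    ⟪nu', nv'⟫ - ⟪nu, nv⟫ = -(sin θ ^ 2 * sin φ ^ 2) * (⟪nu, nv⟫ - 1) ∧
    ‖nu' - nv'‖ ^ 2 - ‖nu - nv‖ ^ 2 = -(sin θ ^ 2 * sin φ ^ 2) * ‖nu - nv‖ ^ 2 ∧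
    ‖nu' - nv'‖ ≤ ‖nu - nv‖ := by
  have hnunu : ⟪nu, nu⟫ = 1 := by
    rw [real_inner_self_eq_norm_sq, hnu]; norm_num
  have hmumu : ⟪mu, mu⟫ = 1 := by
    rw [real_inner_self_eq_norm_sq, hmu]; norm_num
  have hnvnv : ⟪nv, nv⟫ = 1 := by
    rw [real_inner_self_eq_norm_sq, hnv]; norm_num
  have hmvmv : ⟪mv, mv⟫ = 1 := by
    rw [real_inner_self_eq_norm_sq, hmv]; norm_num
  have hll : ⟪l, l⟫ = 1 := by
    rw [real_inner_self_eq_norm_sq, hl]; norm_num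
  have hmunu : ⟪mu, nu⟫ = 0 := by rw [real_inner_comm]; exact hnumu
  have hmvnv : ⟪mv, nv⟫ = 0 := by rw [real_inner_comm]; exact hnvmv
  have hnul : ⟪nu, l⟫ = 0 := by rw [real_inner_comm]; exact hlnu
  have hmul : ⟪mu, l⟫ = 0 := by rw [real_inner_comm]; exact hlmu
  have hnvl : ⟪nv, l⟫ = 0 := by rw [real_inner_comm]; exact hlnv
  have hmvl : ⟪mv, l⟫ = 0 := by rw [real_inner_comm]; exact hlmv
  have hnvmu : ⟪nv, mu⟫ = ⟪mu, nv⟫ := real_inner_comm _ _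
  have hmvnu : ⟪mv, nu⟫ = ⟪nu, mv⟫ := real_inner_comm _ _
  have hpy : sin θ ^ 2 + cos θ ^ 2 = 1 := sin_sq_add_cos_sq θ
  have hpy2 : sin φ ^ 2 + cos φ ^ 2 = 1 := sin_sq_add_cos_sq φ
  have huu : ⟪nu', nu'⟫ = 1 := by
    simp only [hnu', inner_add_left, inner_add_right, real_inner_smul_left,
      real_inner_smul_right, hnunu, hmumu, hll, hnumu, hmunu, hnul, hlnu, hmul, hlmu]
    linear_combination hpy + sin θ ^ 2 * hpy2
  have hvv : ⟪nv', nv'⟫ = 1 := by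
    simp only [hnv', inner_add_left, inner_add_right, real_inner_smul_left,
      real_inner_smul_right, hnvnv, hmvmv, hll, hnvmv, hmvnv, hnvl, hlnv, hmvl, hlmv]
    linear_combination hpy + sin θ ^ 2 * hpy2
  have hnu'1 : ‖nu'‖ = 1 := by
    have h2 : ‖nu'‖ ^ 2 = 1 := by rw [← real_inner_self_eq_norm_sq]; exact huu
    calc ‖nu'‖ = √(‖nu'‖ ^ 2) := (Real.sqrt_sq (norm_nonneg _)).symm
    _ = 1 := by rw [h2, Real.sqrt_one]
  have hnv'1 : ‖nv'‖ = 1 := by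
    have h2 : ‖nv'‖ ^ 2 = 1 := by rw [← real_inner_self_eq_norm_sq]; exact hvv
    calc ‖nv'‖ = √(‖nv'‖ ^ 2) := (Real.sqrt_sq (norm_nonneg _)).symm
    _ = 1 := by rw [h2, Real.sqrt_one]
  have key : ⟪nu', nv'⟫ = cos θ ^ 2 * ⟪nu, nv⟫ + (sin θ * cos φ) ^ 2 * ⟪mu, mv⟫
      + (sin θ * sin φ) ^ 2 + cos θ * (sin θ * cos φ) * (⟪nu, mv⟫ + ⟪mu, nv⟫) := by
    simp only [hnu', hnv', inner_add_left, inner_add_right, real_inner_smul_left,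
      real_inner_smul_right, hll, hnul, hlnu, hmul, hlmu, hnvl, hlnv, hmvl, hlmv, hnvmu, hmvnu]
    ring
  rw [hframe2] at key
  have huv : ⟪nu', nv'⟫ - ⟪nu, nv⟫ = -(sin θ ^ 2 * sin φ ^ 2) * (⟪nu, nv⟫ - 1) := by
    rw [key, hframe1]
    linear_combination (⟪mu, mv⟫ : ℝ) * hpy + ⟪mu, mv⟫ * sin θ ^ 2 * hpy2
  have hd2 : ‖nu' - nv'‖ ^ 2 - ‖nu - nv‖ ^ 2 = -(sin θ ^ 2 * sin φ ^ 2) * ‖nu - nv‖ ^ 2 := by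
    have e1 : ‖nu' - nv'‖ ^ 2 = ‖nu'‖ ^ 2 - 2 * ⟪nu', nv'⟫ + ‖nv'‖ ^ 2 :=
      norm_sub_sq_real nu' nv'
    have e2 : ‖nu - nv‖ ^ 2 = ‖nu‖ ^ 2 - 2 * ⟪nu, nv⟫ + ‖nv‖ ^ 2 :=
      norm_sub_sq_real nu nv
    rw [e1, e2, hnu'1, hnv'1, hnu, hnv]
    linear_combination (-2 : ℝ) * huv
  refine ⟨hnu'1, hnv'1, huv, hd2, ?_⟩
  have h1 : ‖nu' - nv'‖ ^ 2 ≤ ‖nu - nv‖ ^ 2 := by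
    have heq : ‖nu' - nv'‖ ^ 2 = ‖nu - nv‖ ^ 2 - sin θ ^ 2 * sin φ ^ 2 * ‖nu - nv‖ ^ 2 := by
      linear_combination hd2
    rw [heq]
    exact sub_le_self _ (by positivity)
  exact (pow_le_pow_iff_left₀ (norm_nonneg _) (norm_nonneg _) (by norm_num)).mp h1
end

section
/- Let d ≥ 3 and let n_u, m_u, n_v, m_v, l be unit vectors in ℝ^d satisfying the frame hypothesis: n_u ⟂ m_u, n_v ⟂ m_v, l is orthogonal to each of n_u, m_u, n_v, m_v, and n_u·n_v = m_u·m_v, n_u·m_v = −m_u·n_v. Fix θ ∈ ℝ and for φ ∈ [0,π] set n'_u(φ) := cosθ·n_u + sinθ cosφ·m_u + sinθ sinφ·l and n'_v(φ) := cosθ·n_v + sinθ cosφ·m_v + sinθ sinφ·l. Then the average of the coupled post-collisional square distance with respect to the azimuthal density sin^{d−3}φ on [0,π] satisfies: ( ∫₀^π |n'_u(φ) − n'_v(φ)|² sin^{d−3}φ dφ ) / ( ∫₀^π sin^{d−3}φ dφ ) − |n_u − n_v|² = −sin²θ · (c_{d−1}/c_{d−3}) · |n_u − n_v|². -/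
open Real
open scoped RealInnerProductSpace
open intervalIntegral

/-- The `k`-th Wallis integral `c_k = ∫₀^{π/2} sin^k φ dφ`. -/
noncomputable def wallis (k : ℕ) : ℝ := ∫ φ in (0 : ℝ)..(π / 2), sin φ ^ k


lemma sin_pow_int (k : ℕ) : (∫ φ in (0:ℝ)..π, sin φ ^ k) = 2 * wallis k := by
  have h1 : (∫ φ in (0:ℝ)..π, sin φ ^ k)
      = (∫ φ in (0:ℝ)..(π/2), sin φ ^ k) + ∫ φ in (π/2:ℝ)..π, sin φ ^ k := by
    rw [integral_add_adjacent_intervals] <;>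
      exact (Continuous.pow (continuous_sin) k).intervalIntegrable _ _
  have h2 : (∫ φ in (π/2:ℝ)..π, sin φ ^ k) = ∫ φ in (0:ℝ)..(π/2), sin φ ^ k := by
    have := integral_comp_sub_left (a := (π/2:ℝ)) (b := π) (fun x => sin x ^ k) π
    simp only [sub_self] at this
    have h3 : π - π/2 = π/2 := by ring
    rw [h3] at this
    rw [← this]
    apply intervalIntegral.integral_congr
    intro x _
    simp [Real.sin_pi_sub]
  rw [h1, h2, wallis]; ring

lemma wallis_pos (k : ℕ) : 0 < wallis k := by
  have := integral_sin_pow_pos (n := k)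
  rw [sin_pow_int] at this; linarith


/-- Average quadratic contraction of the spherical coupling: averaging
the coupled post-collisional square distance against the azimuthal density `sin^{d−3}φ`
on `[0,π]` gives
`avg |n'_u(φ) − n'_v(φ)|² − |n_u − n_v|² = −sin²θ (c_{d−1}/c_{d−3}) |n_u − n_v|²`. -/
theorem stmt10 {d : ℕ} (hd : 3 ≤ d)
    (nu mu nv mv l : EuclideanSpace ℝ (Fin d))
    (hnu : ‖nu‖ = 1) (hmu : ‖mu‖ = 1) (hnv : ‖nv‖ = 1) (hmv : ‖mv‖ = 1) (hl : ‖l‖ = 1)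
    (hnumu : ⟪nu, mu⟫ = 0) (hnvmv : ⟪nv, mv⟫ = 0)
    (hlnu : ⟪l, nu⟫ = 0) (hlmu : ⟪l, mu⟫ = 0) (hlnv : ⟪l, nv⟫ = 0) (hlmv : ⟪l, mv⟫ = 0)
    (hframe1 : ⟪nu, nv⟫ = ⟪mu, mv⟫) (hframe2 : ⟪nu, mv⟫ = -⟪mu, nv⟫)
    (θ : ℝ) :
    (∫ φ in (0 : ℝ)..π,
        ‖(cos θ • nu + (sin θ * cos φ) • mu + (sin θ * sin φ) • l) -
          (cos θ • nv + (sin θ * cos φ) • mv + (sin θ * sin φ) • l)‖ ^ 2 * sin φ ^ (d - 3))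
      / (∫ φ in (0 : ℝ)..π, sin φ ^ (d - 3))
      - ‖nu - nv‖ ^ 2 =
    -(sin θ ^ 2) * (wallis (d - 1) / wallis (d - 3)) * ‖nu - nv‖ ^ 2 := by
  set A := ‖nu - nv‖ ^ 2 with hA
  -- orthogonality of the differences
  have hAB : ⟪nu - nv, mu - mv⟫ = 0 := by
    rw [inner_sub_left, inner_sub_right, inner_sub_right]
    have h1 : ⟪nu, mv⟫ = -⟪mu, nv⟫ := hframe2
    have h2 : ⟪nv, mu⟫ = ⟪mu, nv⟫ := real_inner_comm _ _
    rw [hnumu, hnvmv, h1, h2]; ring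
  have hBB : ‖mu - mv‖ ^ 2 = A := by
    rw [hA, @norm_sub_sq_real, @norm_sub_sq_real, hnu, hnv, hmu, hmv, hframe1]
  -- pointwise norm computation
  have hpt : ∀ φ : ℝ,
      ‖(cos θ • nu + (sin θ * cos φ) • mu + (sin θ * sin φ) • l) -
          (cos θ • nv + (sin θ * cos φ) • mv + (sin θ * sin φ) • l)‖ ^ 2
        = cos θ ^ 2 * A + (sin θ * cos φ) ^ 2 * A := by
    intro φ
    have hv : (cos θ • nu + (sin θ * cos φ) • mu + (sin θ * sin φ) • l) -
          (cos θ • nv + (sin θ * cos φ) • mv + (sin θ * sin φ) • l)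
        = cos θ • (nu - nv) + (sin θ * cos φ) • (mu - mv) := by
      module
    rw [hv, @norm_add_sq_real]
    rw [real_inner_smul_left, real_inner_smul_right, hAB]
    rw [norm_smul, norm_smul, mul_pow, mul_pow]
    simp only [Real.norm_eq_abs, sq_abs]
    rw [hBB]
    ring
  simp only [hpt]
  set k := d - 3 with hk
  have hd1 : d - 1 = k + 2 := by omega
  -- integrability
  have hint : ∀ m : ℕ, IntervalIntegrable (fun φ : ℝ => sin φ ^ m) MeasureTheory.volume 0 π :=
    fun m => (continuous_sin.pow m).intervalIntegrable _ _
  -- rewrite integrand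
  have hpt2 : ∀ φ : ℝ, (cos θ ^ 2 * A + (sin θ * cos φ) ^ 2 * A) * sin φ ^ k
      = (cos θ ^ 2 * A + sin θ ^ 2 * A) * sin φ ^ k - (sin θ ^ 2 * A) * sin φ ^ (k + 2) := by
    intro φ
    have : cos φ ^ 2 = 1 - sin φ ^ 2 := by
      have := sin_sq_add_cos_sq φ; linarith
    rw [mul_pow, this]; ring
  simp only [hpt2]
  rw [intervalIntegral.integral_sub ((hint k).const_mul _) ((hint (k+2)).const_mul _),
    intervalIntegral.integral_const_mul, intervalIntegral.integral_const_mul]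
  rw [sin_pow_int, sin_pow_int, hd1]
  have hc3 : wallis k ≠ 0 := ne_of_gt (wallis_pos k)
  have htrig : cos θ ^ 2 = 1 - sin θ ^ 2 := by
    have := sin_sq_add_cos_sq θ; linarith
  field_simp
  rw [htrig]
  ring
end

section
/- Let d ≥ 1 and let u, u_*, v, v_* ∈ ℝ^d with u ≠ u_* and v ≠ v_*. Set n_u := (u−u_*)/|u−u_*| and n_v := (v−v_*)/|v−v_*|. Let θ, φ ∈ ℝ and let n'_u, n'_v be unit vectors satisfying the spherical-coupling identity n'_u·n'_v − n_u·n_v = −sin²θ·sin²φ·(n_u·n_v − 1). Define the coupled post-collisional velocities u' := (u+u_*)/2 + (|u−u_*|/2)·n'_u, u'_* := (u+u_*)/2 − (|u−u_*|/2)·n'_u, v' := (v+v_*)/2 + (|v−v_*|/2)·n'_v, v'_* := (v+v_*)/2 − (|v−v_*|/2)·n'_v. Then |u'−v'|² + |u'_*−v'_*|² − |u−v|² − |u_*−v_*|² = −sin²θ·sin²φ·( |u−u_*||v−v_*| − (u−u_*)·(v−v_*) ), and this quantity is ≤ 0. -/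
open Real
open scoped RealInnerProductSpace

/-- Contraction of coupled collisions: if the coupled post-collisional
directions `n'_u, n'_v` satisfy the spherical-coupling identity
`n'_u·n'_v − n_u·n_v = −sin²θ sin²φ (n_u·n_v − 1)` with
`n_u = (u−u_*)/|u−u_*|`, `n_v = (v−v_*)/|v−v_*|`, then the coupled post-collisional
velocities satisfy
`|u'−v'|² + |u'_*−v'_*|² − |u−v|² − |u_*−v_*|²
  = −sin²θ sin²φ (|u−u_*||v−v_*| − (u−u_*)·(v−v_*)) ≤ 0`. -/
theorem stmt11 {d : ℕ} (hd : 1 ≤ d)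
    (u us v vs : EuclideanSpace ℝ (Fin d)) (hu : u ≠ us) (hv : v ≠ vs)
    (θ φ : ℝ)
    (nu' nv' : EuclideanSpace ℝ (Fin d)) (hnu' : ‖nu'‖ = 1) (hnv' : ‖nv'‖ = 1)
    (hcoupl : ⟪nu', nv'⟫ - ⟪‖u - us‖⁻¹ • (u - us), ‖v - vs‖⁻¹ • (v - vs)⟫ =
      -(sin θ ^ 2 * sin φ ^ 2) * (⟪‖u - us‖⁻¹ • (u - us), ‖v - vs‖⁻¹ • (v - vs)⟫ - 1))
    (u' us' v' vs' : EuclideanSpace ℝ (Fin d))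
    (hu' : u' = (2 : ℝ)⁻¹ • (u + us) + (‖u - us‖ / 2) • nu')
    (hus' : us' = (2 : ℝ)⁻¹ • (u + us) - (‖u - us‖ / 2) • nu')
    (hv' : v' = (2 : ℝ)⁻¹ • (v + vs) + (‖v - vs‖ / 2) • nv')
    (hvs' : vs' = (2 : ℝ)⁻¹ • (v + vs) - (‖v - vs‖ / 2) • nv') :
    ‖u' - v'‖ ^ 2 + ‖us' - vs'‖ ^ 2 - ‖u - v‖ ^ 2 - ‖us - vs‖ ^ 2 =
      -(sin θ ^ 2 * sin φ ^ 2) * (‖u - us‖ * ‖v - vs‖ - ⟪u - us, v - vs⟫) ∧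
    ‖u' - v'‖ ^ 2 + ‖us' - vs'‖ ^ 2 - ‖u - v‖ ^ 2 - ‖us - vs‖ ^ 2 ≤ 0 := by

  have hAne : ‖u - us‖ ≠ 0 := by simpa [sub_eq_zero] using hu
  have hBne : ‖v - vs‖ ≠ 0 := by simpa [sub_eq_zero] using hv
  obtain ⟨A, hA⟩ : ∃ x : ℝ, ‖u - us‖ = x := ⟨_, rfl⟩
  obtain ⟨B, hB⟩ : ∃ x : ℝ, ‖v - vs‖ = x := ⟨_, rfl⟩
  obtain ⟨T, hT⟩ : ∃ x : ℝ, ⟪u - us, v - vs⟫ = x := ⟨_, rfl⟩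
  obtain ⟨C, hC⟩ : ∃ x : ℝ, ⟪nu', nv'⟫ = x := ⟨_, rfl⟩
  obtain ⟨s, hs⟩ : ∃ x : ℝ, sin θ ^ 2 * sin φ ^ 2 = x := ⟨_, rfl⟩
  have hA0 : 0 ≤ A := hA ▸ norm_nonneg _
  have hB0 : 0 ≤ B := hB ▸ norm_nonneg _
  have hAne' : A ≠ 0 := hA ▸ hAne
  have hBne' : B ≠ 0 := hB ▸ hBne
  have hs0 : 0 ≤ s := hs ▸ by positivity
  have hCS : T ≤ A * B := by
    rw [← hT, ← hA, ← hB]; exact real_inner_le_norm _ _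
  rw [real_inner_smul_left, real_inner_smul_right, hA, hB, hT, hC, hs] at hcoupl
  have hcoupl' : A * B * C = T - s * (T - A * B) := by
    field_simp at hcoupl
    linarith
  rw [hA] at hu' hus'
  rw [hB] at hv' hvs'
  rw [hA, hB, hT, hs]
  obtain ⟨m, hm⟩ : ∃ x : EuclideanSpace ℝ (Fin d),
      (2:ℝ)⁻¹ • (u + us) - (2:ℝ)⁻¹ • (v + vs) = x := ⟨_, rfl⟩
  obtain ⟨w, hw⟩ : ∃ x : EuclideanSpace ℝ (Fin d),
      (A / 2) • nu' - (B / 2) • nv' = x := ⟨_, rfl⟩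
  obtain ⟨p, hp⟩ : ∃ x : EuclideanSpace ℝ (Fin d),
      (2:ℝ)⁻¹ • (u - us) - (2:ℝ)⁻¹ • (v - vs) = x := ⟨_, rfl⟩
  have e1 : u' - v' = m + w := by rw [hu', hv', ← hm, ← hw]; module
  have e2 : us' - vs' = m - w := by rw [hus', hvs', ← hm, ← hw]; module
  have e3 : u - v = m + p := by rw [← hm, ← hp]; module
  have e4 : us - vs = m - p := by rw [← hm, ← hp]; module
  have nw : ‖w‖ ^ 2 = (A / 2) ^ 2 + (B / 2) ^ 2 - 2 * (A / 2 * (B / 2 * C)) := by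
    rw [← hw, norm_sub_sq_real, real_inner_smul_left, real_inner_smul_right, hC,
      norm_smul, norm_smul, hnu', hnv']
    simp only [Real.norm_eq_abs, abs_div, abs_two, abs_of_nonneg hA0, abs_of_nonneg hB0]
    ring
  have np : ‖p‖ ^ 2 = (A ^ 2 + B ^ 2 - 2 * T) / 4 := by
    rw [← hp, norm_sub_sq_real, real_inner_smul_left, real_inner_smul_right, hT,
      norm_smul, norm_smul, hA, hB]
    simp only [Real.norm_eq_abs]
    rw [show |(2:ℝ)⁻¹| = 2⁻¹ by norm_num]
    ring
  have key : ‖u' - v'‖ ^ 2 + ‖us' - vs'‖ ^ 2 - ‖u - v‖ ^ 2 - ‖us - vs‖ ^ 2 =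
      -s * (A * B - T) := by
    rw [e1, e2, e3, e4, norm_add_sq_real m w, norm_sub_sq_real m w,
      norm_add_sq_real m p, norm_sub_sq_real m p, nw, np]
    linarith [hcoupl']
  refine ⟨key, ?_⟩
  rw [key]
  have := mul_nonneg hs0 (sub_nonneg.mpr hCS)
  linarith
end
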